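/- arXiv:2206.15278 — 6 statements merged into one kernel-verified Lean document; each statement's English description precedes it below -/
import Mathlib

section
/- Let K be a number field and 𝔄 a nonzero principal ideal of O_K with n(𝔄) > ρ_∞(K). Then 𝔄 is strictly large, i.e., 𝔄 has a generator x ∈ O_K with |σ(x)| > 1 for every embedding σ : K → ℂ. -/
open NumberField

/-- The logarithmic embedding of a unit: the coordinate at an infinite place `w`
is `mult w * log (w x)` (i.e. `log|σ(x)|` at real places, `2 log|σ(x)|` at complex places). -/
noncomputable def logEmb (K : Type) [Field K] [NumberField K] (u : (𝓞 K)ˣ) :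
    NumberField.InfinitePlace K → ℝ :=
  fun w => (w.mult : ℝ) * Real.log (w ((u : 𝓞 K) : K))

/-- The covering radius `ρ_∞(K)` of the lattice of units with respect to the sup norm:
the sup over vectors `v` in the hyperplane `∑ coordinates = 0` of the distance (in the
`L∞` norm) from `v` to the lattice `Λ_K = ℓ(𝓞_K^×)`. -/
noncomputable def rhoInf (K : Type) [Field K] [NumberField K] : ℝ :=
  ⨆ v : {v : NumberField.InfinitePlace K → ℝ // ∑ w, v w = 0},
    ⨅ u : (𝓞 K)ˣ, ‖(v : NumberField.InfinitePlace K → ℝ) - logEmb K u‖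

open scoped Classical
open NumberField.InfinitePlace NumberField.Units NumberField.Units.dirichletUnitTheorem

variable {K : Type} [Field K] [NumberField K]

lemma sum_logEmb (u : (𝓞 K)ˣ) : ∑ w, logEmb K u w = 0 := by
  have h := congrArg Real.log (prod_eq_abs_norm ((u : 𝓞 K) : K))
  rw [Units.norm, Rat.cast_one, Real.log_one, Real.log_prod] at h
  · simpa [logEmb, Real.log_pow] using h
  · exact fun w _ => pow_ne_zero _ (AbsoluteValue.ne_zero _ (coe_ne_zero u))

lemma sum_split (f : NumberField.InfinitePlace K → ℝ) :
    ∑ w, f w = f w₀ + ∑ w : {w : NumberField.InfinitePlace K // w ≠ w₀}, f w.1 := by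
  rw [← Finset.add_sum_erase _ f (Finset.mem_univ w₀)]
  congr 1
  refine Finset.sum_subtype _ (fun w => ?_) f
  simp [Finset.mem_erase]

lemma logEmb_eq (u : (𝓞 K)ˣ) (w : {w : NumberField.InfinitePlace K // w ≠ w₀}) :
    logEmb K u w.1 = logEmbedding K (Additive.ofMul u) w := rfl

lemma exists_bound (K : Type) [Field K] [NumberField K] :
    ∃ C : ℝ, 0 ≤ C ∧ ∀ v : NumberField.InfinitePlace K → ℝ, ∑ w, v w = 0 →
      ∃ u : (𝓞 K)ˣ, ‖v - logEmb K u‖ ≤ C := by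
  have : Module.Free ℤ (unitLattice K) := ZLattice.module_free ℝ (unitLattice K)
  have : Module.Finite ℤ (unitLattice K) := ZLattice.module_finite ℝ (unitLattice K)
  let b := (Module.Free.chooseBasis ℤ (unitLattice K)).ofZLatticeBasis ℝ (unitLattice K)
  obtain ⟨C0, hC0⟩ :=
    isBounded_iff_forall_norm_le.mp (ZSpan.fundamentalDomain_isBounded b)
  set m := Fintype.card (NumberField.InfinitePlace K) with hm
  have hm1 : (1 : ℝ) ≤ m := by exact_mod_cast Fintype.card_pos
  refine ⟨m * max C0 0, by positivity, fun v hv => ?_⟩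
  set v' : {w : NumberField.InfinitePlace K // w ≠ w₀} → ℝ := fun w => v w.1 with hv'def
  obtain ⟨ℓ, hℓ, -⟩ := ZSpan.exist_unique_vadd_mem_fundamentalDomain b (-v')
  have hmem : (ℓ : {w : NumberField.InfinitePlace K // w ≠ w₀} → ℝ) ∈ unitLattice K := by
    have key : ∀ x : {w : NumberField.InfinitePlace K // w ≠ w₀} → ℝ,
        x ∈ Submodule.span ℤ (Set.range ⇑b) → x ∈ unitLattice K := by
      intro x hx
      rwa [Module.Basis.ofZLatticeBasis_span] at hx
    exact key _ ℓ.2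
  obtain ⟨u, -, hu⟩ := hmem
  refine ⟨Additive.toMul u, ?_⟩
  have hb : ‖(ℓ : {w : NumberField.InfinitePlace K // w ≠ w₀} → ℝ) + -v'‖ ≤ C0 := hC0 _ hℓ
  set f := v - logEmb K (Additive.toMul u) with hf
  have hcoord : ∀ w : {w : NumberField.InfinitePlace K // w ≠ w₀}, |f w.1| ≤ max C0 0 := by
    intro w
    have hℓw : (ℓ : {w : NumberField.InfinitePlace K // w ≠ w₀} → ℝ) w
        = logEmb K (Additive.toMul u) w.1 := by rw [← hu]; rfl
    have hfw : f w.1 = -(((ℓ : {w : NumberField.InfinitePlace K // w ≠ w₀} → ℝ) + -v') w) := by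
      simp only [hf, Pi.sub_apply, Pi.add_apply, Pi.neg_apply, hℓw, hv'def]
      ring
    rw [hfw, abs_neg]
    exact le_max_of_le_left ((norm_le_pi_norm _ w).trans hb)
  have hsum : ∑ w, f w = 0 := by
    rw [hf]
    simp only [Pi.sub_apply, Finset.sum_sub_distrib, hv, sum_logEmb, sub_zero]
  have hw0 : |f w₀| ≤ m * max C0 0 := by
    have hs := sum_split f
    rw [hsum] at hs
    have hfw0 : f w₀ = -∑ w : {w : NumberField.InfinitePlace K // w ≠ w₀}, f w.1 := by linarith
    rw [hfw0, abs_neg]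
    calc |∑ w : {w : NumberField.InfinitePlace K // w ≠ w₀}, f w.1|
        ≤ ∑ w : {w : NumberField.InfinitePlace K // w ≠ w₀}, |f w.1| :=
          Finset.abs_sum_le_sum_abs _ _
      _ ≤ ∑ _w : {w : NumberField.InfinitePlace K // w ≠ w₀}, max C0 0 :=
          Finset.sum_le_sum (fun w _ => hcoord w)
      _ = Fintype.card {w : NumberField.InfinitePlace K // w ≠ w₀} * max C0 0 := by
          rw [Finset.sum_const, nsmul_eq_mul, Finset.card_univ]
      _ ≤ m * max C0 0 := by
          have := Fintype.card_subtype_le (fun w : NumberField.InfinitePlace K => w ≠ w₀)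
          exact mul_le_mul_of_nonneg_right (by exact_mod_cast this) (le_max_right _ _)
  refine (pi_norm_le_iff_of_nonneg (by positivity)).mpr fun w => ?_
  by_cases hw : w = w₀
  · subst hw; simpa using hw0
  · have h1 : |f w| ≤ max C0 0 := hcoord ⟨w, hw⟩
    have : |f w| ≤ m * max C0 0 := h1.trans (le_mul_of_one_le_left (le_max_right _ _) hm1)
    simpa using this

lemma rhoInf_bddAbove (K : Type) [Field K] [NumberField K] :
    BddAbove (Set.range (fun v : {v : NumberField.InfinitePlace K → ℝ // ∑ w, v w = 0} =>
      ⨅ u : (𝓞 K)ˣ, ‖(v : NumberField.InfinitePlace K → ℝ) - logEmb K u‖)) := by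
  obtain ⟨C, -, hC⟩ := exists_bound K
  refine ⟨C, ?_⟩
  rintro x ⟨v, rfl⟩
  obtain ⟨u, hu⟩ := hC v v.2
  exact (ciInf_le ⟨0, fun x hx => by obtain ⟨u', rfl⟩ := hx; exact norm_nonneg _⟩ u).trans hu

lemma rhoInf_nonneg (K : Type) [Field K] [NumberField K] : 0 ≤ rhoInf K := by
  have h0 : (0 : ℝ) ≤ ⨅ u : (𝓞 K)ˣ,
      ‖((⟨0, by simp⟩ : {v : NumberField.InfinitePlace K → ℝ // ∑ w, v w = 0}) :
        NumberField.InfinitePlace K → ℝ) - logEmb K u‖ :=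
    le_ciInf fun u => norm_nonneg _
  exact h0.trans (le_ciSup (rhoInf_bddAbove K) ⟨0, by simp⟩)


/-- Every nonzero principal ideal `𝔄` of `𝓞 K` with logarithmic norm
`n(𝔄) = log N(𝔄) / [K:ℚ]` greater than the covering radius `ρ_∞(K)` is strictly large:
it has a generator all of whose Archimedean embeddings have absolute value `> 1`. -/
theorem largeness_of_big_norm (K : Type) [Field K] [NumberField K]
    (A : Ideal (𝓞 K)) (hA : A ≠ ⊥) (hP : Submodule.IsPrincipal A)
    (h : rhoInf K < Real.log (Ideal.absNorm A : ℝ) / (Module.finrank ℚ K : ℝ)) :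
    ∃ x : 𝓞 K, A = Ideal.span {x} ∧
      ∀ σ : K →+* ℂ, 1 < ‖σ (x : K)‖ := by
  obtain ⟨y, hy⟩ := hP.principal
  have hy0 : y ≠ 0 := by
    rintro rfl
    exact hA (hy.trans (Ideal.span_singleton_eq_bot.mpr rfl))
  have hyK : ((y : 𝓞 K) : K) ≠ 0 := fun hc => hy0 (RingOfIntegers.coe_eq_zero_iff.mp hc)
  set n : ℝ := Real.log (Ideal.absNorm A : ℝ) / (Module.finrank ℚ K : ℝ) with hn
  have hd : (0 : ℝ) < (Module.finrank ℚ K : ℝ) := by exact_mod_cast Module.finrank_pos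
  have hn0 : 0 < n := lt_of_le_of_lt (rhoInf_nonneg K) h
  have hlog : ∑ w : NumberField.InfinitePlace K, (w.mult : ℝ) * Real.log (w ((y : 𝓞 K) : K)) = Real.log (Ideal.absNorm A : ℝ) := by
    have h1 := congrArg Real.log (prod_eq_abs_norm ((y : 𝓞 K) : K))
    rw [Real.log_prod (s := Finset.univ) (f := fun w : NumberField.InfinitePlace K => w ((y : 𝓞 K) : K) ^ w.mult)
      (fun w _ => pow_ne_zero _ (AbsoluteValue.ne_zero _ hyK))] at h1
    simp_rw [Real.log_pow] at h1
    rw [h1]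
    congr 1
    symm
    rw [hy, show Submodule.span (𝓞 K) ({y} : Set (𝓞 K)) = Ideal.span {y} from rfl,
      Ideal.absNorm_span_singleton, Nat.cast_natAbs, ← Algebra.coe_norm_int]
    push_cast
    ring
  set v : NumberField.InfinitePlace K → ℝ :=
    fun w => (w.mult : ℝ) * Real.log (w ((y : 𝓞 K) : K)) - (w.mult : ℝ) * n with hvdef
  have hsm : (∑ w : NumberField.InfinitePlace K, (w.mult : ℝ)) = (Module.finrank ℚ K : ℝ) := by
    rw [← Nat.cast_sum, sum_mult_eq]
  have hv : ∑ w, v w = 0 := by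
    have h2 : ∑ w, v w = Real.log (Ideal.absNorm A : ℝ) - (Module.finrank ℚ K : ℝ) * n := by
      simp only [hvdef]
      rw [Finset.sum_sub_distrib, hlog, ← Finset.sum_mul, hsm]
    rw [h2, hn, mul_comm, div_mul_cancel₀ _ hd.ne', sub_self]
  have h1 : (⨅ u : (𝓞 K)ˣ, ‖v - logEmb K u‖) ≤ rhoInf K := by
    rw [rhoInf]
    exact le_ciSup (rhoInf_bddAbove K) ⟨v, hv⟩
  obtain ⟨u, hu⟩ := exists_lt_of_ciInf_lt (h1.trans_lt h)
  refine ⟨y * ((u⁻¹ : (𝓞 K)ˣ) : 𝓞 K), ?_, ?_⟩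
  · rw [hy]; exact Ideal.span_singleton_eq_span_singleton.mpr ⟨u⁻¹, rfl⟩
  · intro σ
    set w := NumberField.InfinitePlace.mk σ with hwdef
    set x : 𝓞 K := y * ((u⁻¹ : (𝓞 K)ˣ) : 𝓞 K) with hxdef
    have hu0 : w (((u : (𝓞 K)ˣ) : 𝓞 K) : K) ≠ 0 := AbsoluteValue.ne_zero _ (coe_ne_zero u)
    have hK1 : ((((u⁻¹ : (𝓞 K)ˣ) : 𝓞 K) : K)) * (((u : (𝓞 K)ˣ) : 𝓞 K) : K) = 1 := by
      have huinv : ((u⁻¹ : (𝓞 K)ˣ) : 𝓞 K) * ((u : (𝓞 K)ˣ) : 𝓞 K) = 1 := by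
        rw [← Units.val_mul, inv_mul_cancel, Units.val_one]
      exact_mod_cast congrArg (algebraMap (𝓞 K) K) huinv
    have hwinv : w ((((u⁻¹ : (𝓞 K)ˣ) : 𝓞 K)) : K)
        = (w (((u : (𝓞 K)ˣ) : 𝓞 K) : K))⁻¹ := by
      refine eq_inv_of_mul_eq_one_left ?_
      rw [← map_mul, hK1, map_one]
    have hxK : ((x : 𝓞 K) : K) = ((y : 𝓞 K) : K) * ((((u⁻¹ : (𝓞 K)ˣ) : 𝓞 K)) : K) := by
      rw [hxdef]; push_cast; ring
    have huK : ((((u⁻¹ : (𝓞 K)ˣ) : 𝓞 K)) : K) ≠ 0 := by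
      intro hc
      rw [hc, zero_mul] at hK1
      exact zero_ne_one hK1
    have hxne : ((x : 𝓞 K) : K) ≠ 0 := by
      rw [hxK]
      exact mul_ne_zero hyK huK
    have hy0' : w ((y : 𝓞 K) : K) ≠ 0 := AbsoluteValue.ne_zero _ hyK
    have hwx : w ((x : 𝓞 K) : K) = w ((y : 𝓞 K) : K) * (w (((u : (𝓞 K)ˣ) : 𝓞 K) : K))⁻¹ := by
      rw [hxK, map_mul, hwinv]
    have hlogx : Real.log (w ((x : 𝓞 K) : K))
        = Real.log (w ((y : 𝓞 K) : K)) - Real.log (w (((u : (𝓞 K)ˣ) : 𝓞 K) : K)) := by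
      rw [hwx, Real.log_mul hy0' (inv_ne_zero hu0), Real.log_inv]
      ring
    have hcoord : |(v - logEmb K u) w| < n := by
      rw [← Real.norm_eq_abs]
      exact (norm_le_pi_norm (v - logEmb K u) w).trans_lt hu
    have hexp : (v - logEmb K u) w = (w.mult : ℝ) * (Real.log (w ((x : 𝓞 K) : K)) - n) := by
      simp only [Pi.sub_apply, hvdef, logEmb, hlogx]
      ring
    have hmult1 : (1 : ℝ) ≤ (w.mult : ℝ) := one_le_mult
    have hlogpos : 0 < Real.log (w ((x : 𝓞 K) : K)) := by
      have h4 : |(w.mult : ℝ)| * |Real.log (w ((x : 𝓞 K) : K)) - n| < n := by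
        rw [← abs_mul, ← hexp]; exact hcoord
      have h5 : |Real.log (w ((x : 𝓞 K) : K)) - n| ≤
          |(w.mult : ℝ)| * |Real.log (w ((x : 𝓞 K) : K)) - n| :=
        le_mul_of_one_le_left (abs_nonneg _) (by
          rw [abs_of_nonneg (by positivity)]; exact hmult1)
      have h6 := abs_lt.mp (h5.trans_lt h4)
      linarith [h6.1]
    have hpos : 0 < w ((x : 𝓞 K) : K) := pos_iff.mpr hxne
    exact (Real.log_pos_iff hpos.le).mp hlogpos
end

section
/- Let K be a number field. All but finitely many nonzero principal ideals of O_K are strictly large; that is, the set of nonzero principal ideals of O_K that do not have a generator x with |σ(x)| > 1 for all embeddings σ : K → ℂ is finite. -/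
open NumberField

open NumberField.InfinitePlace NumberField.mixedEmbedding NumberField.Units
  NumberField.Units.dirichletUnitTheorem Finset Module in
/-- Key analytic lemma: elements of the fundamental cone with large enough norm have all
their `normAtPlace` values greater than `1`. -/
theorem aux_cone_strictly_large (K : Type) [Field K] [NumberField K] :
    ∃ B : ℝ, ∀ x ∈ fundamentalCone K, B < mixedEmbedding.norm x →
      ∀ w : InfinitePlace K, 1 < normAtPlace w x := by
  classical
  obtain ⟨C₀, hC₀⟩ := (ZSpan.fundamentalDomain_isBounded
    ((basisUnitLattice K).ofZLatticeBasis ℝ _)).exists_norm_le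
  set C : ℝ := max C₀ 0 with hCdef
  have hC0 : 0 ≤ C := le_max_right _ _
  set d : ℝ := (finrank ℚ K : ℝ) with hddef
  have hd : 0 < d := by
    rw [hddef]; exact_mod_cast finrank_pos
  set n : ℝ := (Fintype.card (InfinitePlace K) : ℝ) with hndef
  have hn0 : 0 ≤ n := by rw [hndef]; positivity
  refine ⟨Real.exp (d * (n * C + C + 1)), fun x hx hN w ↦ ?_⟩
  have hN0 : 0 < mixedEmbedding.norm x := fundamentalCone.norm_pos_of_mem hx
  set N := mixedEmbedding.norm x with hNdef
  set t : ℝ := Real.log N * d⁻¹ with htdef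
  have ht : n * C + C + 1 < t := by
    have h1 : d * (n * C + C + 1) < Real.log N := (Real.lt_log_iff_exp_lt hN0).mpr hN
    rw [htdef, ← div_eq_mul_inv, lt_div_iff₀ hd]
    nlinarith [h1]
  have htpos : 0 < t := by nlinarith [mul_nonneg hn0 hC0]
  have hposAt : ∀ w, 0 < normAtPlace w x := fundamentalCone.normAtPlace_pos_of_mem hx
  have hlog : ∀ w' : {w : InfinitePlace K // w ≠ w₀}, |NumberField.mixedEmbedding.logMap x w'| ≤ C := by
    intro w'
    have h1 : ‖NumberField.mixedEmbedding.logMap x‖ ≤ C₀ := hC₀ _ hx.1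
    exact le_trans (norm_le_pi_norm (NumberField.mixedEmbedding.logMap x) w')
      (le_trans h1 (le_max_left _ _))
  have hmult : ∀ w : InfinitePlace K, (1 : ℝ) ≤ mult w := fun w ↦ one_le_mult
  have hlow : ∀ w : InfinitePlace K, w ≠ w₀ → t - C ≤ Real.log (normAtPlace w x) := by
    intro w hw
    have h := abs_le.mp (hlog ⟨w, hw⟩)
    rw [logMap_apply] at h
    rw [← hNdef, ← hddef, ← htdef] at h
    rcases le_or_gt t (Real.log (normAtPlace w x)) with h' | h'
    · linarith
    · have h2 : (mult w : ℝ) * (Real.log (normAtPlace w x) - t) ≤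
          1 * (Real.log (normAtPlace w x) - t) :=
        mul_le_mul_of_nonpos_right (hmult w) (by linarith)
      linarith [h.1]
  have hupp : ∀ w : InfinitePlace K, w ≠ w₀ →
      (mult w : ℝ) * Real.log (normAtPlace w x) ≤ (mult w : ℝ) * t + C := by
    intro w hw
    have h := (abs_le.mp (hlog ⟨w, hw⟩)).2
    rw [logMap_apply] at h
    rw [← hNdef, ← hddef, ← htdef, mul_sub] at h
    linarith
  have hsum : Real.log N = ∑ w : InfinitePlace K, (mult w : ℝ) * Real.log (normAtPlace w x) := by
    rw [hNdef, mixedEmbedding.norm_apply,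
      Real.log_prod (fun w _ ↦ pow_ne_zero _ (hposAt w).ne')]
    simp_rw [Real.log_pow]
  have hℓ : ∀ w : InfinitePlace K, 0 < Real.log (normAtPlace w x) := by
    intro w
    by_cases hw : w = w₀
    · have hupp' : ∀ v : InfinitePlace K, v ≠ w →
          (mult v : ℝ) * Real.log (normAtPlace v x) ≤ (mult v : ℝ) * t + C :=
        fun v hv ↦ hupp v (hw ▸ hv)
      have hS : ∑ v ∈ univ.erase w, (mult v : ℝ) * Real.log (normAtPlace v x)
          ≤ ∑ v ∈ univ.erase w, ((mult v : ℝ) * t + C) :=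
        Finset.sum_le_sum fun v hv ↦ hupp' v (Finset.mem_erase.mp hv).1
      have hS2 : ∑ v ∈ univ.erase w, ((mult v : ℝ) * t + C)
          = (∑ v ∈ univ.erase w, (mult v : ℝ)) * t + (univ.erase w).card * C := by
        rw [Finset.sum_add_distrib, Finset.sum_const, Finset.sum_mul, nsmul_eq_mul]
      have hmerase : (mult w : ℝ) + ∑ v ∈ univ.erase w, (mult v : ℝ) = d := by
        rw [Finset.add_sum_erase _ (fun v : InfinitePlace K => (mult v : ℝ))
          (Finset.mem_univ w), hddef]
        exact_mod_cast congrArg (Nat.cast : ℕ → ℝ) (sum_mult_eq (K := K))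
      have hsplit : Real.log N = (mult w : ℝ) * Real.log (normAtPlace w x)
          + ∑ v ∈ univ.erase w, (mult v : ℝ) * Real.log (normAtPlace v x) := by
        rw [hsum, Finset.add_sum_erase _
          (fun v : InfinitePlace K => (mult v : ℝ) * Real.log (normAtPlace v x))
          (Finset.mem_univ w)]
      have hcard : ((univ.erase w).card : ℝ) ≤ n := by
        rw [hndef]
        exact_mod_cast (Finset.card_le_card (Finset.erase_subset _ _)).trans_eq
          Finset.card_univ
      have hLdt : Real.log N = d * t := by
        rw [htdef, mul_comm (Real.log N) d⁻¹, ← mul_assoc, mul_inv_cancel₀ hd.ne', one_mul]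
      have hEt : (∑ v ∈ univ.erase w, (mult v : ℝ)) * t = (d - (mult w : ℝ)) * t := by
        rw [← hmerase]; ring
      have hkey : t - n * C ≤ (mult w : ℝ) * Real.log (normAtPlace w x) := by
        nlinarith [hS, hS2, hsplit, hLdt, hEt,
          le_mul_of_one_le_left htpos.le (hmult w),
          mul_le_mul_of_nonneg_right hcard hC0]
      by_contra hcon
      push_neg at hcon
      have : (mult w : ℝ) * Real.log (normAtPlace w x) ≤ 0 :=
        mul_nonpos_of_nonneg_of_nonpos (by linarith [hmult w]) hcon
      nlinarith [mul_nonneg hn0 hC0]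
    · have := hlow w hw
      nlinarith [mul_nonneg hn0 hC0]
  exact (Real.log_pos_iff (hposAt w).le).mp (hℓ w)

open NumberField.InfinitePlace NumberField.mixedEmbedding in
/-- All but finitely many nonzero principal ideals of `𝓞 K` are strictly large:
the set of nonzero principal ideals having no generator `x` with `|σ(x)| > 1` for
every embedding `σ : K → ℂ` is finite. -/
theorem finitely_many_non_strictly_large (K : Type) [Field K] [NumberField K] :
    {A : Ideal (𝓞 K) | A ≠ ⊥ ∧ Submodule.IsPrincipal A ∧
      ¬ ∃ x : 𝓞 K, A = Ideal.span {x} ∧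
        ∀ σ : K →+* ℂ, 1 < ‖σ (x : K)‖}.Finite := by
  obtain ⟨B, hB⟩ := aux_cone_strictly_large K
  refine (Ideal.finite_setOf_absNorm_le (S := 𝓞 K) ⌈B⌉₊).subset ?_
  rintro A ⟨hA0, hP, hnot⟩
  by_contra hlt
  simp only [Set.mem_setOf_eq, not_le] at hlt
  obtain ⟨x, hxA⟩ := hP.principal
  have hxA' : A = Ideal.span {x} := hxA
  have hx0 : x ≠ 0 := by
    rintro rfl
    exact hA0 (hxA'.trans (by simp))
  have hxK : (x : K) ≠ 0 := by exact_mod_cast hx0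
  have hnorm : mixedEmbedding.norm (mixedEmbedding K (x : K)) ≠ 0 := by
    rw [mixedEmbedding.norm_eq_norm]
    simp only [ne_eq, abs_eq_zero, Rat.cast_eq_zero, Algebra.norm_eq_zero_iff]
    exact hxK
  obtain ⟨u, hu⟩ := fundamentalCone.exists_unit_smul_mem hnorm
  set y : 𝓞 K := (u : 𝓞 K) * x with hy
  have hyemb : mixedEmbedding K (y : K) = u • mixedEmbedding K (x : K) := by
    rw [unitSMul_smul, ← map_mul]
    congr 1
  have habs : (Ideal.absNorm A : ℝ) = ((|Algebra.norm ℚ (x : K)| : ℚ) : ℝ) := by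
    rw [hxA', Ideal.absNorm_span_singleton, ← Algebra.coe_norm_int]
    push_cast [Nat.cast_natAbs]
    ring
  have hBlt : B < mixedEmbedding.norm (u • mixedEmbedding K (x : K)) := by
    rw [norm_unit_smul, mixedEmbedding.norm_eq_norm, ← habs]
    calc B ≤ (⌈B⌉₊ : ℝ) := Nat.le_ceil B
      _ < (Ideal.absNorm A : ℝ) := by exact_mod_cast hlt
  refine hnot ⟨y, ?_, ?_⟩
  · rw [hxA']
    exact Ideal.span_singleton_eq_span_singleton.mpr ⟨u, by rw [hy]; exact mul_comm x ↑u⟩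
  · intro σ
    have h1 : 1 < normAtPlace (InfinitePlace.mk σ) (mixedEmbedding K (y : K)) := by
      rw [hyemb]
      exact hB _ hu hBlt (InfinitePlace.mk σ)
    rwa [normAtPlace_apply, InfinitePlace.apply] at h1
end

section
/- Let K be a number field and 𝔄 a nonzero proper ideal of O_K (𝔄 ⊊ O_K, 𝔄 ≠ 0). Then there exists a finite extension L of K and an element x ∈ O_L such that 𝔄 O_L = x O_L and |τ(x)| > 1 for every embedding τ : L → ℂ; i.e., 𝔄 becomes strictly large in a suitable finite extension of K. -/
open NumberField

open scoped IntermediateField nonZeroDivisors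

/-- In a Dedekind domain, taking `n`-th powers of nonzero ideals is injective. -/
theorem ideal_pow_injective {R : Type*} [CommRing R] [IsDomain R] [IsDedekindDomain R]
    {I J : Ideal R} {n : ℕ} (hn : n ≠ 0) (hI : I ≠ ⊥) (hJ : J ≠ ⊥)
    (h : I ^ n = J ^ n) : I = J := by
  classical
  haveI : Nontrivial (Ideal R) := ⟨⊥, ⊤, fun hbt => by
    have h10 : (1 : R) ∈ (⊤ : Ideal R) := trivial
    rw [← hbt] at h10
    exact one_ne_zero (Ideal.mem_bot.mp h10)⟩
  have hI0 : I ≠ 0 := by rwa [Ideal.zero_eq_bot]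
  have hJ0 : J ≠ 0 := by rwa [Ideal.zero_eq_bot]
  have hIa : Associates.mk I ≠ 0 := Associates.mk_ne_zero.mpr hI0
  have hJa : Associates.mk J ≠ 0 := Associates.mk_ne_zero.mpr hJ0
  have hmk : Associates.mk I ^ n = Associates.mk J ^ n := by
    rw [← Associates.mk_pow, ← Associates.mk_pow, h]
  have key : Associates.mk I = Associates.mk J := by
    apply Associates.eq_of_eq_counts hIa hJa
    intro p hp
    have h1 := Associates.count_pow hIa hp n
    have h2 := Associates.count_pow hJa hp n
    rw [hmk, h2] at h1
    exact (Nat.eq_of_mul_eq_mul_left (Nat.pos_of_ne_zero hn) h1.symm)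
  exact associated_iff_eq.mp (Associates.mk_eq_mk_iff_associated.mp key)

/-- Key lemma: if `α` is a nonzero algebraic integer with `|N(α)| > 1`, then some power
`α ^ k` has an associate all of whose archimedean absolute values are `> 1`. -/
theorem exists_generator_aux (K : Type) [Field K] [NumberField K] (α : 𝓞 K) (hα : α ≠ 0)
    (hnorm : 1 < |Algebra.norm ℚ (α : K)|) :
    ∃ (c : 𝓞 K) (k : ℕ), 0 < k ∧ Ideal.span {c} = Ideal.span {α} ^ k ∧
      ∀ w : InfinitePlace K, 1 < w (c : K) := by
  classical
  have hαK : (α : K) ≠ 0 := by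
    simpa using hα
  have hwα : ∀ w : InfinitePlace K, w (α : K) ≠ 0 := fun w => by
    simpa using hαK
  set g : InfinitePlace K → ℝ :=
    fun w => (InfinitePlace.mult w : ℝ) * Real.log (w (α : K)) with hg
  set D := Real.log (∏ w : InfinitePlace K, w (α : K) ^ InfinitePlace.mult w) with hDdef
  have hDpos : 0 < D := by
    rw [hDdef, InfinitePlace.prod_eq_abs_norm (α : K)]
    exact Real.log_pos (by exact_mod_cast hnorm)
  have hsum : ∑ w, g w = D := by
    rw [hDdef, Real.log_prod (fun w _ => pow_ne_zero _ (hwα w))]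
    exact Finset.sum_congr rfl fun w _ => by rw [Real.log_pow]
  -- the unit lattice
  set b := (Units.basisUnitLattice K).ofZLatticeBasis ℝ (Units.unitLattice K) with hb
  obtain ⟨C₀, hC₀⟩ := (ZSpan.fundamentalDomain_isBounded b).subset_closedBall 0
  set C := max C₀ 0 with hC
  have hCnonneg : 0 ≤ C := le_max_right _ _
  have key : ∀ y : ({w : InfinitePlace K // w ≠ Units.dirichletUnitTheorem.w₀} → ℝ), ∃ u : (𝓞 K)ˣ,
      ∀ w : {w : InfinitePlace K // w ≠ Units.dirichletUnitTheorem.w₀},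
        |y w - (Units.logEmbedding K (Additive.ofMul u)) w| ≤ C := by
    intro y
    have hfl : (ZSpan.floor b y : ({w : InfinitePlace K // w ≠ Units.dirichletUnitTheorem.w₀} → ℝ))
        ∈ Units.unitLattice K := by
      have h1 := (ZSpan.floor b y).2
      exact (SetLike.ext_iff.mp ((Units.basisUnitLattice K).ofZLatticeBasis_span ℝ) _).mp h1
    have hfl' : (ZSpan.floor b y : ({w : InfinitePlace K // w ≠ Units.dirichletUnitTheorem.w₀} → ℝ))
        ∈ Submodule.map (Units.logEmbedding K).toIntLinearMap ⊤ := hfl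
    obtain ⟨u, -, hu⟩ := Submodule.mem_map.mp hfl'
    refine ⟨Additive.toMul u, fun w => ?_⟩
    have hfract : y - (ZSpan.floor b y : ({w : InfinitePlace K // w ≠ Units.dirichletUnitTheorem.w₀} → ℝ))
        = ZSpan.fract b y := (ZSpan.fract_apply b y).symm
    have hmem := ZSpan.fract_mem_fundamentalDomain b y
    have hball := hC₀ hmem
    rw [Metric.mem_closedBall, dist_zero_right] at hball
    have hcomp : |(ZSpan.fract b y) w| ≤ C₀ := by
      calc |(ZSpan.fract b y) w| = ‖(ZSpan.fract b y) w‖ := (Real.norm_eq_abs _).symm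
        _ ≤ ‖ZSpan.fract b y‖ := norm_le_pi_norm _ w
        _ ≤ C₀ := hball
    have heq : y w - (Units.logEmbedding K (Additive.ofMul (Additive.toMul u))) w
        = (ZSpan.fract b y) w := by
      rw [← hfract]
      have : Units.logEmbedding K (Additive.ofMul (Additive.toMul u))
          = (ZSpan.floor b y : ({w : InfinitePlace K // w ≠ Units.dirichletUnitTheorem.w₀} → ℝ)) := by
        rw [← hu]; rfl
      rw [this]; rfl
    rw [heq]
    exact hcomp.trans (le_max_left _ _)
  set n := Fintype.card (InfinitePlace K) with hn
  -- choose k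
  obtain ⟨k, hk⟩ := exists_nat_gt (((n : ℝ) * (2 * C + 1) + 1) / D)
  have hkD : (n : ℝ) * (2 * C + 1) + 1 ≤ k * D := by
    rw [div_lt_iff₀ hDpos] at hk
    linarith
  have hkpos : 0 < k := by
    by_contra hc
    push_neg at hc
    interval_cases k
    · simp only [Nat.cast_zero, zero_mul] at hkD
      have : (0:ℝ) ≤ (n : ℝ) * (2 * C + 1) := by positivity
      linarith
  set y : {w : InfinitePlace K // w ≠ Units.dirichletUnitTheorem.w₀} → ℝ :=
    fun w => -((k : ℝ) * g w.1) + (C + 1) with hy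
  obtain ⟨u, hu⟩ := key y
  refine ⟨(u : 𝓞 K) * α ^ k, k, hkpos, ?_, ?_⟩
  · rw [Ideal.span_singleton_pow]
    exact Ideal.span_singleton_eq_span_singleton.mpr
      ⟨u⁻¹, by rw [mul_comm, ← mul_assoc, Units.inv_mul, one_mul]⟩
  · -- the absolute value estimates
    intro w
    have huK : ((u : 𝓞 K) : K) ≠ 0 := by
      simpa using (Units.ne_zero u)
    have hwu : w (((u : 𝓞 K)) : K) ≠ 0 := by simpa using huK
    have hcoe : (((u : 𝓞 K) * α ^ k : 𝓞 K) : K) = ((u : 𝓞 K) : K) * ((α : K)) ^ k := by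
      push_cast; ring
    have hlog : Real.log (w ((((u : 𝓞 K) * α ^ k : 𝓞 K)) : K))
        = Real.log (w (((u : 𝓞 K)) : K)) + (k : ℝ) * Real.log (w ((α : K))) := by
      rw [hcoe, map_mul, map_pow, Real.log_mul hwu (pow_ne_zero _ (hwα w)), Real.log_pow]
    -- the estimate for the log with multiplicity
    have hmultpos : 0 < (InfinitePlace.mult w : ℝ) := by
      have := InfinitePlace.mult_pos (w := w)
      exact_mod_cast this
    have hP : 0 < (InfinitePlace.mult w : ℝ) * Real.log (w (((u : 𝓞 K)) : K))
        + (k : ℝ) * g w := by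
      by_cases hww : w = Units.dirichletUnitTheorem.w₀
      · -- the distinguished place: use that the sum of the components is controlled
        have hsumlog := Units.dirichletUnitTheorem.sum_logEmbedding_component (K := K) u
        -- upper bound each component
        have hub : ∀ w' : {w : InfinitePlace K // w ≠ Units.dirichletUnitTheorem.w₀},
            (Units.logEmbedding K (Additive.ofMul u)) w' ≤ -((k : ℝ) * g w'.1) + (2 * C + 1) := by
          intro w'
          have := hu w'
          rw [abs_le] at this
          have h1 := this.1
          rw [hy] at h1
          simp only at h1
          linarith
        have hsumub : ∑ w' : {w : InfinitePlace K // w ≠ Units.dirichletUnitTheorem.w₀},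
            (Units.logEmbedding K (Additive.ofMul u)) w'
            ≤ ∑ w' : {w : InfinitePlace K // w ≠ Units.dirichletUnitTheorem.w₀}, (-((k : ℝ) * g w'.1) + (2 * C + 1)) :=
          Finset.sum_le_sum fun w' _ => hub w'
        have hsubsum : ∑ w' : {w : InfinitePlace K // w ≠ Units.dirichletUnitTheorem.w₀}, g w'.1
            = D - g (Units.dirichletUnitTheorem.w₀ : InfinitePlace K) := by
          have h1 : ∑ w' ∈ Finset.univ.erase (Units.dirichletUnitTheorem.w₀ : InfinitePlace K), g w'
              = ∑ w' : {w : InfinitePlace K // w ≠ Units.dirichletUnitTheorem.w₀}, g w'.1 := by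
            refine Finset.sum_subtype _ (fun w' => ?_) g
            simp
          have h2 := Finset.sum_erase_add Finset.univ g (Finset.mem_univ (Units.dirichletUnitTheorem.w₀ : InfinitePlace K))
          rw [hsum] at h2
          rw [← h1]
          linarith
        have hcard : (Fintype.card {w : InfinitePlace K // w ≠ Units.dirichletUnitTheorem.w₀} : ℝ) ≤ (n : ℝ) := by
          exact_mod_cast Fintype.card_subtype_le _
        have hconstsum : ∑ _w' : {w : InfinitePlace K // w ≠ Units.dirichletUnitTheorem.w₀}, (2 * C + 1 : ℝ)
            ≤ (n : ℝ) * (2 * C + 1) := by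
          rw [Finset.sum_const, Finset.card_univ, nsmul_eq_mul]
          have h2C : (0:ℝ) ≤ 2 * C + 1 := by linarith
          exact mul_le_mul_of_nonneg_right hcard h2C
        have hsplit : ∑ w' : {w : InfinitePlace K // w ≠ Units.dirichletUnitTheorem.w₀},
            (-((k : ℝ) * g w'.1) + (2 * C + 1))
            = -((k : ℝ) * (D - g (Units.dirichletUnitTheorem.w₀ : InfinitePlace K)))
              + ∑ _w' : {w : InfinitePlace K // w ≠ Units.dirichletUnitTheorem.w₀}, (2 * C + 1 : ℝ) := by
          rw [Finset.sum_add_distrib, Finset.sum_neg_distrib, ← Finset.mul_sum, hsubsum]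
        have hlow : -(InfinitePlace.mult (Units.dirichletUnitTheorem.w₀ : InfinitePlace K) : ℝ) * Real.log ((Units.dirichletUnitTheorem.w₀ : InfinitePlace K) ((u : 𝓞 K) : K))
            ≤ -((k : ℝ) * (D - g (Units.dirichletUnitTheorem.w₀ : InfinitePlace K))) + (n : ℝ) * (2 * C + 1) := by
          calc -(InfinitePlace.mult (Units.dirichletUnitTheorem.w₀ : InfinitePlace K) : ℝ) * Real.log ((Units.dirichletUnitTheorem.w₀ : InfinitePlace K) ((u : 𝓞 K) : K))
              = ∑ w' : {w : InfinitePlace K // w ≠ Units.dirichletUnitTheorem.w₀},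
                (Units.logEmbedding K (Additive.ofMul u)) w' := hsumlog.symm
            _ ≤ -((k : ℝ) * (D - g (Units.dirichletUnitTheorem.w₀ : InfinitePlace K)))
                + ∑ _w' : {w : InfinitePlace K // w ≠ Units.dirichletUnitTheorem.w₀}, (2 * C + 1 : ℝ) := by
                rw [← hsplit]; exact hsumub
            _ ≤ -((k : ℝ) * (D - g (Units.dirichletUnitTheorem.w₀ : InfinitePlace K))) + (n : ℝ) * (2 * C + 1) := by linarith
        subst hww
        have hkDD : 1 ≤ (k : ℝ) * D - (n : ℝ) * (2 * C + 1) := by linarith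
        nlinarith [hlow]
      · -- other places: direct estimate
        have hw' := hu ⟨w, hww⟩
        rw [abs_le] at hw'
        have h2 := hw'.2
        rw [hy] at h2
        simp only [Units.dirichletUnitTheorem.logEmbedding_component] at h2
        -- h2 : -(k * g w) + (C+1) - mult w * log (w u) ≤ C
        have : -((k : ℝ) * g w) + 1 ≤ (InfinitePlace.mult w : ℝ) * Real.log (w ((u : 𝓞 K) : K)) := by
          linarith
        linarith
    -- conclude
    have hlogpos : 0 < Real.log (w ((((u : 𝓞 K) * α ^ k : 𝓞 K)) : K)) := by
      rw [hlog]
      have hgw : g w = (InfinitePlace.mult w : ℝ) * Real.log (w (α : K)) := rfl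
      rw [hgw] at hP
      have hfactor : (InfinitePlace.mult w : ℝ)
          * (Real.log (w (((u : 𝓞 K)) : K)) + (k : ℝ) * Real.log (w ((α : K)))) > 0 := by
        nlinarith
      nlinarith
    by_contra hcon
    push_neg at hcon
    have : Real.log (w ((((u : 𝓞 K) * α ^ k : 𝓞 K)) : K)) ≤ 0 :=
      Real.log_nonpos (AbsoluteValue.nonneg _ _) hcon
    linarith

/-- Every nonzero proper ideal `𝔄 ⊊ 𝓞 K` becomes strictly large in a suitable finite
extension `L` of `K`: the extended ideal `𝔄 𝓞_L` is generated by an element `x` with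
`|τ(x)| > 1` for every embedding `τ : L → ℂ`. (An extension of number fields is
automatically finite.) -/
theorem strictly_large_in_finite_extension (K : Type) [Field K] [NumberField K]
    (A : Ideal (𝓞 K)) (hA : A ≠ ⊥) (hA' : A ≠ ⊤) :
    ∃ (L : Type) (_ : Field L) (_ : NumberField L) (_ : Algebra K L),
      ∃ x : 𝓞 L, Ideal.map (algebraMap (𝓞 K) (𝓞 L)) A = Ideal.span {x} ∧
        ∀ τ : L →+* ℂ, 1 < ‖τ (x : L)‖ := by
  classical
  have hA0 : A ∈ (Ideal (𝓞 K))⁰ := mem_nonZeroDivisors_of_ne_zero (by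
    rwa [Ne, Ideal.zero_eq_bot])
  set h := Fintype.card (ClassGroup (𝓞 K)) with hh
  have hh1 : 0 < h := Fintype.card_pos
  have hmemAh : A ^ h ∈ (Ideal (𝓞 K))⁰ := pow_mem hA0 h
  have hprin : (A ^ h).IsPrincipal := by
    have h1 : ClassGroup.mk0 ((⟨A, hA0⟩ : (Ideal (𝓞 K))⁰) ^ h) = 1 := by
      rw [map_pow, pow_card_eq_one]
    have h2 : ((⟨A, hA0⟩ : (Ideal (𝓞 K))⁰) ^ h) = ⟨A ^ h, hmemAh⟩ := by
      ext
      simp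
    rw [h2] at h1
    exact (ClassGroup.mk0_eq_one_iff hmemAh).mp h1
  obtain ⟨α, hα₀⟩ := hprin
  have hα : A ^ h = Ideal.span {α} := by rw [hα₀, Ideal.submodule_span_eq]
  have hAh0 : A ^ h ≠ ⊥ := by
    have : A ^ h ≠ 0 := pow_ne_zero h (by rwa [Ne, Ideal.zero_eq_bot])
    rwa [Ideal.zero_eq_bot] at this
  have hα0 : α ≠ 0 := by
    intro e
    apply hAh0
    rw [hα, e]
    exact Ideal.span_singleton_eq_bot.mpr rfl
  -- the norm bound
  have habs2 : 2 ≤ Ideal.absNorm A := by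
    have h0 : Ideal.absNorm A ≠ 0 := fun e => hA (Ideal.absNorm_eq_zero_iff.mp e)
    have h1 : Ideal.absNorm A ≠ 1 := fun e => hA' (Ideal.absNorm_eq_one_iff.mp e)
    omega
  have hnorm : 1 < |Algebra.norm ℚ (α : K)| := by
    have h1 : Ideal.absNorm (A ^ h) = Ideal.absNorm A ^ h := map_pow _ _ _
    have h2 : Ideal.absNorm (A ^ h) = (Algebra.norm ℤ α).natAbs := by
      rw [hα]
      exact Ideal.absNorm_span_singleton α
    have h3 : 2 ≤ (Algebra.norm ℤ α).natAbs := by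
      rw [← h2, h1]
      calc 2 ≤ Ideal.absNorm A := habs2
        _ ≤ Ideal.absNorm A ^ h := Nat.le_self_pow hh1.ne' _
    rw [← Algebra.coe_norm_int]
    have h4 : (1 : ℚ) < ((Algebra.norm ℤ α).natAbs : ℚ) := by exact_mod_cast h3
    calc (1:ℚ) < ((Algebra.norm ℤ α).natAbs : ℚ) := h4
      _ = |((Algebra.norm ℤ α : ℚ))| := by
          rw [Nat.cast_natAbs, Int.cast_abs]
  obtain ⟨c, k, hk, hspan, hc⟩ := exists_generator_aux K α hα0 hnorm
  set N := h * k with hN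
  have hNpos : 0 < N := Nat.mul_pos hh1 hk
  have hspanA : Ideal.span {c} = A ^ N := by
    rw [hspan, ← hα, ← pow_mul]
  have hc0 : c ≠ 0 := by
    intro e
    apply hAh0
    have : A ^ N = ⊥ := by
      rw [← hspanA, e]
      exact Ideal.span_singleton_eq_bot.mpr rfl
    have h5 : A ^ N ≠ ⊥ := by
      have : A ^ N ≠ 0 := pow_ne_zero N (by rwa [Ne, Ideal.zero_eq_bot])
      rwa [Ideal.zero_eq_bot] at this
    exact absurd this h5
  -- build the extension
  set Ω := AlgebraicClosure K with hΩ
  obtain ⟨β, hβ⟩ := IsAlgClosed.exists_pow_nat_eq (k := Ω) (algebraMap K Ω (c : K)) hNpos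
  have hβint : IsIntegral K β := by
    refine ⟨Polynomial.X ^ N - Polynomial.C ((c : K)), Polynomial.monic_X_pow_sub_C _ hNpos.ne', ?_⟩
    rw [Polynomial.eval₂_sub, Polynomial.eval₂_X_pow, Polynomial.eval₂_C, hβ, sub_self]
  haveI : FiniteDimensional K K⟮β⟯ := IntermediateField.adjoin.finiteDimensional hβint
  haveI : NumberField K⟮β⟯ := NumberField.of_module_finite K K⟮β⟯
  refine ⟨K⟮β⟯, inferInstance, inferInstance, inferInstance, ?_⟩
  have hβL : β ∈ K⟮β⟯ := IntermediateField.mem_adjoin_simple_self K β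
  -- integrality of β
  have hcint : IsIntegral ℤ (algebraMap K Ω (c : K)) := by
    have h6 : IsIntegral ℤ (c : K) := RingOfIntegers.isIntegral_coe c
    exact h6.map (IsScalarTower.toAlgHom ℤ K Ω)
  have hβint' : IsIntegral ℤ β := by
    apply IsIntegral.of_pow hNpos
    rwa [hβ]
  have hxmem : IsIntegral ℤ ((⟨β, hβL⟩ : K⟮β⟯)) := by
    have hinj : Function.Injective (algebraMap K⟮β⟯ Ω) := (algebraMap K⟮β⟯ Ω).injective
    rw [← isIntegral_algebraMap_iff hinj]
    exact hβint'
  refine ⟨⟨⟨β, hβL⟩, hxmem⟩, ?_, ?_⟩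
  · -- ideal equality
    set x : 𝓞 K⟮β⟯ := ⟨⟨β, hβL⟩, hxmem⟩ with hx
    have hxN : x ^ N = algebraMap (𝓞 K) (𝓞 K⟮β⟯) c := by
      apply RingOfIntegers.ext
      have h7 : ((algebraMap (𝓞 K) (𝓞 K⟮β⟯) c : 𝓞 K⟮β⟯) : K⟮β⟯) = algebraMap K K⟮β⟯ (c : K) := rfl
      rw [h7]
      push_cast
      apply Subtype.ext
      push_cast
      exact hβ
    have hmapbot : Ideal.map (algebraMap (𝓞 K) (𝓞 K⟮β⟯)) A ≠ ⊥ := fun e =>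
      hA ((Ideal.map_eq_bot_iff_of_injective
        (RingOfIntegers.algebraMap.injective K K⟮β⟯)).mp e)
    have hxne : x ≠ 0 := by
      intro e
      apply hc0
      have h8 : x ^ N = 0 := by rw [e, zero_pow hNpos.ne']
      rw [hxN] at h8
      exact (map_eq_zero_iff _ (RingOfIntegers.algebraMap.injective K K⟮β⟯)).mp h8
    apply ideal_pow_injective hNpos.ne' hmapbot
      (by rw [Ne, Ideal.span_singleton_eq_bot]; exact hxne)
    rw [← Ideal.map_pow, ← hspanA, Ideal.map_span, Set.image_singleton,
      Ideal.span_singleton_pow, hxN]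
  · -- embeddings
    intro τ
    have hw := hc (InfinitePlace.mk (τ.comp (algebraMap K K⟮β⟯)))
    rw [NumberField.InfinitePlace.apply] at hw
    have hxNL : ((⟨β, hβL⟩ : K⟮β⟯)) ^ N = algebraMap K K⟮β⟯ (c : K) := by
      apply Subtype.ext
      push_cast
      exact hβ
    have habs : ‖τ ((⟨β, hβL⟩ : K⟮β⟯))‖ ^ N
        = ‖(τ.comp (algebraMap K K⟮β⟯)) (c : K)‖ := by
      rw [RingHom.comp_apply, ← hxNL, map_pow, norm_pow]
    have h9 : 1 < ‖τ ((⟨β, hβL⟩ : K⟮β⟯))‖ ^ N := by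
      rw [habs]
      exact hw
    exact (one_lt_pow_iff_of_nonneg (norm_nonneg _) hNpos.ne').mp h9
end

section
/- Let x be a nonzero algebraic integer such that the field ℚ(x) is either totally real or a CM field, and suppose n(x) < (1/2)·log((1+√5)/2) and x is not a unit. Then for every finite extension K' of ℚ(x) that is totally real or CM, the ideal x O_{K'} is not large: no generator y of x O_{K'} satisfies |σ(y)| ≥ 1 for all embeddings σ : K' → ℂ. -/
open NumberField Module

/-- A number field is totally real if all its infinite places are real. -/
def IsTotallyRealField (K : Type) [Field K] : Prop :=
  ∀ v : NumberField.InfinitePlace K, v.IsReal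

/-- A CM field: a totally imaginary number field which is a quadratic extension of a
totally real subfield. -/
def IsCMField (K : Type) [Field K] : Prop :=
  (∀ v : NumberField.InfinitePlace K, v.IsComplex) ∧
  ∃ F : Subfield K, IsTotallyRealField F ∧ Module.finrank F K = 2

lemma norm_abs_one_le' {L : Type*} [Field L] [NumberField L] {z : 𝓞 L} (hz : z ≠ 0) :
    (1 : ℝ) ≤ |(Algebra.norm ℚ (z : L) : ℝ)| := by
  rw [← Algebra.coe_norm_int]
  push_cast
  rw [← Int.cast_abs]
  exact_mod_cast Int.one_le_abs (Algebra.norm_ne_zero_iff.mpr hz)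

lemma core' {L : Type*} [Field L] [NumberField L] (β : 𝓞 L)
    (hreal : ∀ ψ : L →+* ℂ, ∃ r : ℝ, 1 ≤ r ∧ ψ (β : L) = (r : ℂ))
    (hβ : β ≠ 1) :
    (2 : ℝ) ^ finrank ℚ L ≤ |(Algebra.norm ℚ (β : L) : ℝ)| := by
  classical
  choose r hr1 hr2 using hreal
  set d := finrank ℚ L with hd
  have hcard : Fintype.card (L →ₐ[ℚ] ℂ) = d := AlgHom.card ℚ L ℂ
  have hprod : ∀ z : 𝓞 L, ∀ s : (L →+* ℂ) → ℝ,
      (∀ ψ : L →+* ℂ, ψ (z : L) = (s ψ : ℂ)) →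
      (Algebra.norm ℚ (z : L) : ℝ) = ∏ ψ : L →ₐ[ℚ] ℂ, s ψ.toRingHom := by
    intro z s hs
    have h1 : ((Algebra.norm ℚ (z : L) : ℚ) : ℂ) = ∏ ψ : L →ₐ[ℚ] ℂ, ψ (z : L) := by
      rw [← Algebra.norm_eq_prod_embeddings ℚ ℂ ((z : L))]
      simp [eq_ratCast]
    have h2 : ((Algebra.norm ℚ (z : L) : ℝ) : ℂ) = ((∏ ψ : L →ₐ[ℚ] ℂ, s ψ.toRingHom : ℝ) : ℂ) := by
      push_cast
      rw [h1]
      exact Finset.prod_congr rfl fun ψ _ => hs ψ.toRingHom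
    exact_mod_cast h2
  have hN : (Algebra.norm ℚ (β : L) : ℝ) = ∏ ψ : L →ₐ[ℚ] ℂ, r ψ.toRingHom :=
    hprod β _ hr2
  have hN' : (Algebra.norm ℚ ((β - 1 : 𝓞 L) : L) : ℝ)
      = ∏ ψ : L →ₐ[ℚ] ℂ, (r ψ.toRingHom - 1) := by
    refine hprod (β - 1) (fun ψ => r ψ - 1) fun ψ => ?_
    push_cast
    rw [map_sub, map_one, hr2 ψ]
  have h0 : (0 : ℝ) ≤ ∏ ψ : L →ₐ[ℚ] ℂ, (r ψ.toRingHom - 1) :=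
    Finset.prod_nonneg fun ψ _ => by linarith [hr1 ψ.toRingHom]
  have hN'1 : (1 : ℝ) ≤ ∏ ψ : L →ₐ[ℚ] ℂ, (r ψ.toRingHom - 1) := by
    calc (1:ℝ) ≤ |(Algebra.norm ℚ ((β - 1 : 𝓞 L) : L) : ℝ)| :=
          norm_abs_one_le' (sub_ne_zero.mpr hβ)
      _ = ∏ ψ : L →ₐ[ℚ] ℂ, (r ψ.toRingHom - 1) := by rw [hN', abs_of_nonneg h0]
  have hsq : ((2:ℝ) ^ d) ^ 2 ≤ ((Algebra.norm ℚ (β : L) : ℝ)) ^ 2 := by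
    rw [hN, ← Finset.prod_pow]
    calc ((2:ℝ)^d)^2 = ∏ _ψ : L →ₐ[ℚ] ℂ, (4:ℝ) := by
          rw [Finset.prod_const, Finset.card_univ, hcard,
            show (4:ℝ) = 2^2 by norm_num, ← pow_mul, ← pow_mul, mul_comm]
      _ ≤ (∏ _ψ : L →ₐ[ℚ] ℂ, (4:ℝ)) * ∏ ψ : L →ₐ[ℚ] ℂ, (r ψ.toRingHom - 1) :=
          le_mul_of_one_le_right (Finset.prod_nonneg fun _ _ => by norm_num) hN'1
      _ = ∏ ψ : L →ₐ[ℚ] ℂ, (4 * (r ψ.toRingHom - 1)) := by rw [← Finset.prod_mul_distrib]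
      _ ≤ ∏ ψ : L →ₐ[ℚ] ℂ, (r ψ.toRingHom) ^ 2 := by
          refine Finset.prod_le_prod (fun ψ _ => by nlinarith [hr1 ψ.toRingHom]) fun ψ _ => by
            nlinarith [sq_nonneg (r ψ.toRingHom - 2)]
  have h2d : (0:ℝ) ≤ (2:ℝ) ^ d := by positivity
  nlinarith [sq_abs ((Algebra.norm ℚ (β : L) : ℝ)),
    abs_nonneg ((Algebra.norm ℚ (β : L) : ℝ)), hsq, h2d]

lemma cm_norm_real' {K' : Type} [Field K'] [NumberField K'] {F : Subfield K'}
    [FiniteDimensional F K']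
    (hFreal : ∀ v : InfinitePlace F, v.IsReal)
    (hcomplex : ∀ v : InfinitePlace K', v.IsComplex)
    (hF2 : finrank F K' = 2)
    (y : K') (hy : ∀ σ : K' →+* ℂ, 1 ≤ ‖σ y‖) (τ : F →+* ℂ) :
    ∃ r : ℝ, 1 ≤ r ∧ τ (Algebra.norm F y) = (r : ℂ) := by
  classical
  letI : Algebra F ℂ := τ.toAlgebra
  have halg : algebraMap F ℂ = τ := rfl
  have hcard : Fintype.card (K' →ₐ[F] ℂ) = 2 := by rw [AlgHom.card]; exact hF2
  have hτreal : ∀ f : F, (starRingEnd ℂ) (τ f) = τ f := by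
    intro f
    have h2 : ComplexEmbedding.IsReal τ := InfinitePlace.isReal_mk_iff.mp (hFreal _)
    exact RingHom.congr_fun (ComplexEmbedding.isReal_iff.mp h2) f
  obtain ⟨ψ⟩ : Nonempty (K' →ₐ[F] ℂ) := Fintype.card_pos_iff.mp (by rw [hcard]; norm_num)
  set ψc : K' →ₐ[F] ℂ :=
    { toRingHom := (starRingEnd ℂ).comp ψ.toRingHom,
      commutes' := fun f => by
        show (starRingEnd ℂ) (ψ.toRingHom (algebraMap F K' f)) = algebraMap F ℂ f
        rw [show ψ.toRingHom (algebraMap F K' f) = algebraMap F ℂ f from ψ.commutes f, halg]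
        exact hτreal f } with hψc
  have hψcval : ∀ z : K', ψc z = (starRingEnd ℂ) (ψ z) := fun z => rfl
  have hne : ψ ≠ ψc := by
    intro h
    have hreal : ComplexEmbedding.IsReal (ψ : K' →+* ℂ) := by
      rw [ComplexEmbedding.isReal_iff]
      ext z
      have := congrArg (fun (g : K' →ₐ[F] ℂ) => g z) h
      simpa [hψcval] using this.symm
    have := hcomplex (InfinitePlace.mk (ψ : K' →+* ℂ))
    rw [← InfinitePlace.not_isReal_iff_isComplex, InfinitePlace.isReal_mk_iff] at this
    exact this hreal
  have huniv : (Finset.univ : Finset (K' →ₐ[F] ℂ)) = {ψ, ψc} := by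
    symm
    apply Finset.eq_univ_of_card
    rw [Finset.card_pair hne, hcard]
  have hprod : τ (Algebra.norm F y) = ψ y * ψc y := by
    rw [← halg, Algebra.norm_eq_prod_embeddings, huniv, Finset.prod_pair hne]
  refine ⟨Complex.normSq (ψ y), ?_, ?_⟩
  · have h1 : 1 ≤ ‖ψ y‖ := hy (ψ : K' →+* ℂ)
    have h2 : ‖ψ y‖ ^ 2 = Complex.normSq (ψ y) := Complex.sq_norm _
    nlinarith [h1, h2]
  · rw [hprod, hψcval, Complex.mul_conj]

set_option maxHeartbeats 1600000 in
/-- Let `x` be a nonzero algebraic integer, not a unit, generating the number field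
`K = ℚ(x)`, with `K` totally real or CM, and with logarithmic norm
`n(x) = log|N_{K/ℚ}(x)|/[K:ℚ] < (1/2)·log((1+√5)/2)`. Then for every finite extension `K'`
of `ℚ(x)` which is totally real or CM, the ideal `x 𝓞_{K'}` is not large: no generator `y`
of it satisfies `|σ(y)| ≥ 1` for all embeddings `σ : K' → ℂ`. -/
theorem not_large_in_totally_real_or_CM (K : Type) [Field K] [NumberField K]
    (x : 𝓞 K) (hx : x ≠ 0) (hxgen : IntermediateField.adjoin ℚ {(x : K)} = ⊤)
    (hKtype : IsTotallyRealField K ∨ _root_.IsCMField K)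
    (hxsmall : Real.log |Algebra.norm ℚ (x : K)| / (Module.finrank ℚ K : ℝ) <
      (1 / 2) * Real.log ((1 + Real.sqrt 5) / 2))
    (hxunit : ¬ IsUnit x)
    (K' : Type) [Field K'] [NumberField K'] [Algebra K K']
    (hK'type : IsTotallyRealField K' ∨ _root_.IsCMField K') :
    ¬ ∃ y : 𝓞 K',
      Ideal.span {y} = Ideal.span {algebraMap (𝓞 K) (𝓞 K') x} ∧
      ∀ σ : K' →+* ℂ, 1 ≤ ‖σ (y : K')‖ := by
  classical
  rintro ⟨y, hspan, hy⟩
  haveI : FiniteDimensional K K' := FiniteDimensional.right ℚ K K'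
  set x' : 𝓞 K' := algebraMap (𝓞 K) (𝓞 K') x with hx'def
  have hassoc : Associated y x' := Ideal.span_singleton_eq_span_singleton.mp hspan
  obtain ⟨u, hu⟩ := hassoc
  set d := finrank ℚ K with hdd
  set e := finrank K K' with hee
  have hd : 0 < d := finrank_pos
  have he : 0 < e := finrank_pos
  have hde : finrank ℚ K' = d * e := (finrank_mul_finrank ℚ K K').symm
  set A : ℝ := |(Algebra.norm ℚ (x : K) : ℝ)| with hA
  -- A ≥ 2
  have hA2 : (2:ℝ) ≤ A := by
    have hne0 : Algebra.norm ℤ x ≠ 0 := Algebra.norm_ne_zero_iff.mpr hx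
    have hne1 : |Algebra.norm ℤ x| ≠ 1 := by
      intro h
      apply hxunit
      rw [NumberField.isUnit_iff_norm, RingOfIntegers.coe_norm, ← Algebra.coe_norm_int]
      exact_mod_cast h
    have : 2 ≤ |Algebra.norm ℤ x| := by
      rcases (Int.one_le_abs hne0).lt_or_eq with h | h
      · omega
      · exact absurd h.symm hne1
    rw [hA, ← Algebra.coe_norm_int]
    push_cast
    rw [← Int.cast_abs]
    exact_mod_cast this
  -- |N_{K'/ℚ} x'| = A ^ e
  have hx'K : ((x' : 𝓞 K') : K') = algebraMap K K' (x : K) := rfl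
  have hNx' : |(Algebra.norm ℚ ((x' : 𝓞 K') : K') : ℝ)| = A ^ e := by
    rw [hx'K, ← Algebra.norm_norm (R := ℚ) (S := K) (a := algebraMap K K' (x : K)),
      Algebra.norm_algebraMap, map_pow]
    rw [hA]
    push_cast
    rw [abs_pow]
  -- |N y| = A ^ e
  have hNu : |(Algebra.norm ℚ ((u : 𝓞 K') : K') : ℝ)| = 1 := by
    have := NumberField.isUnit_iff_norm.mp u.isUnit
    rw [RingOfIntegers.coe_norm] at this
    rw [← Rat.cast_abs, this]
    norm_num
  have hNy : |(Algebra.norm ℚ ((y : 𝓞 K') : K') : ℝ)| = A ^ e := by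
    have hcoe : ((x' : 𝓞 K') : K') = (y : K') * ((u : 𝓞 K') : K') := by
      rw [← hu]; push_cast; ring
    have := hNx'
    rw [hcoe, map_mul] at this
    push_cast at this
    rw [abs_mul, hNu, mul_one] at this
    exact this
  -- A^2 < 2^d
  have hφpos : (0:ℝ) < (1 + Real.sqrt 5) / 2 := by positivity
  have hφlt : (1 + Real.sqrt 5) / 2 < 2 := by
    nlinarith [Real.sq_sqrt (show (0:ℝ) ≤ 5 by norm_num), Real.sqrt_nonneg 5]
  have hlogA : Real.log A / d < (1/2) * Real.log ((1 + Real.sqrt 5) / 2) := hxsmall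
  have hA2d : A ^ 2 < 2 ^ d := by
    have hApos : (0:ℝ) < A := by linarith
    have hdpos : (0:ℝ) < (d:ℝ) := by exact_mod_cast hd
    have h1 : Real.log A < (1/2) * Real.log ((1 + Real.sqrt 5) / 2) * d :=
      (div_lt_iff₀ hdpos).mp hlogA
    have h2 : Real.log ((1 + Real.sqrt 5) / 2) < Real.log 2 :=
      Real.log_lt_log hφpos hφlt
    have h3 : Real.log (A ^ 2) < Real.log (2 ^ d) := by
      rw [Real.log_pow, Real.log_pow]
      push_cast
      nlinarith
    exact (Real.log_lt_log_iff (by positivity) (show (0:ℝ) < 2 ^ d by positivity)).mp h3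
  have hAe : (2:ℝ) ≤ A ^ e := le_trans hA2 (le_self_pow₀ (by linarith) he.ne')
  have hfinal : ¬ ((2:ℝ) ^ (d * e) ≤ (A ^ e) ^ 2) := by
    intro hle
    have h1 : (A ^ e) ^ 2 = (A ^ 2) ^ e := by
      rw [← pow_mul, mul_comm, pow_mul]
    have h2 : (A ^ 2) ^ e < ((2:ℝ) ^ d) ^ e :=
      pow_lt_pow_left₀ hA2d (by positivity) he.ne'
    have h3 : ((2:ℝ) ^ d) ^ e = 2 ^ (d * e) := (pow_mul 2 d e).symm
    linarith
  rcases hK'type with hTR | hCM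
  · -- totally real case
    set β : 𝓞 K' := y ^ 2 with hβ
    have hβK : ((β : 𝓞 K') : K') = ((y : 𝓞 K') : K') ^ 2 := map_pow (algebraMap (𝓞 K') K') y 2
    have hNβ : |(Algebra.norm ℚ ((β : 𝓞 K') : K') : ℝ)| = (A ^ e) ^ 2 := by
      rw [hβK, map_pow]
      push_cast
      rw [abs_pow, hNy]
    have hreal : ∀ ψ : K' →+* ℂ, ∃ r : ℝ, 1 ≤ r ∧ ψ ((β : 𝓞 K') : K') = (r : ℂ) := by
      intro ψ
      have hψr : ComplexEmbedding.IsReal ψ := InfinitePlace.isReal_mk_iff.mp (hTR _)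
      have hri : (starRingEnd ℂ) (ψ (y : K')) = ψ (y : K') :=
        RingHom.congr_fun (ComplexEmbedding.isReal_iff.mp hψr) _
      obtain ⟨r0, hr0⟩ : ∃ r0 : ℝ, (r0 : ℂ) = ψ (y : K') :=
        ⟨(ψ (y : K')).re, Complex.conj_eq_iff_re.mp hri⟩
      refine ⟨r0 ^ 2, ?_, ?_⟩
      · have h1 : 1 ≤ ‖ψ (y : K')‖ := hy ψ
        rw [← hr0, Complex.norm_real, Real.norm_eq_abs] at h1
        nlinarith [h1, sq_abs r0]
      · rw [hβK, map_pow, ← hr0]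
        push_cast
        ring
    have hβ1 : β ≠ 1 := by
      intro h
      rw [h] at hNβ
      simp only [map_one, OneMemClass.coe_one, Rat.cast_one, abs_one] at hNβ
      nlinarith [hAe]
    have hcore := core' β hreal hβ1
    rw [hNβ, hde] at hcore
    exact hfinal hcore
  · -- CM case
    obtain ⟨hcomplex, F, hFreal, hF2⟩ := hCM
    haveI : FiniteDimensional F K' := Module.Finite.of_restrictScalars_finite ℚ F K'
    haveI : FiniteDimensional ℚ F := FiniteDimensional.left ℚ F K'
    haveI : NumberField F := ⟨⟩
    have hβint : IsIntegral ℤ (Algebra.norm F ((y : 𝓞 K') : K')) :=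
      Algebra.isIntegral_norm F y.isIntegral_coe
    set β : 𝓞 F := ⟨Algebra.norm F ((y : 𝓞 K') : K'), hβint⟩ with hβdef
    have hβcoe : ((β : 𝓞 F) : F) = Algebra.norm F ((y : 𝓞 K') : K') := rfl
    have hreal : ∀ τ : F →+* ℂ, ∃ r : ℝ, 1 ≤ r ∧ τ ((β : 𝓞 F) : F) = (r : ℂ) := by
      intro τ
      simpa [hβcoe] using cm_norm_real' hFreal hcomplex hF2 ((y : 𝓞 K') : K') hy τ
    have hNβ : |(Algebra.norm ℚ ((β : 𝓞 F) : F) : ℝ)| = A ^ e := by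
      rw [hβcoe, Algebra.norm_norm (R := ℚ) (S := F) (a := ((y : 𝓞 K') : K'))]
      exact hNy
    have hβ1 : β ≠ 1 := by
      intro h
      rw [h] at hNβ
      simp only [map_one, OneMemClass.coe_one, Rat.cast_one, abs_one] at hNβ
      linarith [hAe]
    have hcore := core' β hreal hβ1
    rw [hNβ] at hcore
    have hFr : finrank ℚ (F : Subfield K') * 2 = d * e := by
      rw [← hF2, finrank_mul_finrank]
      exact hde.symm ▸ rfl
    refine hfinal ?_
    calc (2:ℝ) ^ (d * e) = ((2:ℝ) ^ (finrank ℚ F)) ^ 2 := by rw [← pow_mul, hFr]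
      _ ≤ (A ^ e) ^ 2 := pow_le_pow_left₀ (by positivity) hcore 2
end

section
/- Let K be a number field of degree d with unit rank r ≥ 1, and let 1 ≤ n ≤ r. Then ρ_∞(K) ≥ (d/s)·μ_K(n)^{1/n}, where μ_K(n) is the infimum of h(v₁)·…·h(v_n) over all n-tuples of multiplicatively independent units v₁,…,v_n ∈ O_K^×. -/
open NumberField

/-- The Weil height of an algebraic integer `x ∈ 𝓞 K`. -/
noncomputable def weilHeight (K : Type) [Field K] [NumberField K] (x : 𝓞 K) : ℝ :=
  (∑ σ : K →+* ℂ, max 0 (Real.log ‖σ (x : K)‖)) / (Module.finrank ℚ K : ℝ)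

/-- A family of units is multiplicatively independent if the only integer relation
`∏ v_i^{a_i} = 1` is the trivial one. -/
def MultIndep (K : Type) [Field K] [NumberField K] {n : ℕ} (v : Fin n → (𝓞 K)ˣ) : Prop :=
  ∀ e : Fin n → ℤ, (∏ i, v i ^ e i) = 1 → ∀ i, e i = 0

/-- `μ_K(n)`: the infimum of `h(v₁)⋯h(v_n)` over all `n`-tuples of multiplicatively
independent units of `𝓞 K`. -/
noncomputable def muK (K : Type) [Field K] [NumberField K] (n : ℕ) : ℝ :=
  sInf {t : ℝ | ∃ v : Fin n → (𝓞 K)ˣ, MultIndep K v ∧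
    t = ∏ i, weilHeight K ((v i : 𝓞 K))}

set_option linter.unusedSectionVars false

namespace RhoAux
open NumberField.Units NumberField.Units.dirichletUnitTheorem NumberField.InfinitePlace Finset
open scoped Classical
variable {K : Type} [Field K] [NumberField K]


lemma logEmb_apply (u : (𝓞 K)ˣ) (w : InfinitePlace K) :
    logEmb K u w = (mult w : ℝ) * Real.log (w (u : K)) := rfl

/-- the coercion hom -/
noncomputable def cHom (K : Type) [Field K] [NumberField K] : (𝓞 K)ˣ →* K :=
  (Units.coeHom K).comp (Units.map (algebraMap (𝓞 K) K))

lemma cHom_apply (u : (𝓞 K)ˣ) : cHom K u = (u : K) := rfl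

lemma coe_prod_zpow {m : ℕ} (v : Fin m → (𝓞 K)ˣ) (e : Fin m → ℤ) :
    ((∏ i, v i ^ e i : (𝓞 K)ˣ) : K) = ∏ i, ((v i : K) ^ e i) := by
  rw [← cHom_apply, map_prod]
  exact Finset.prod_congr rfl fun i _ => map_zpow (cHom K) (v i) (e i)

lemma place_pos (w : InfinitePlace K) (u : (𝓞 K)ˣ) : 0 < w (u : K) :=
  (AbsoluteValue.pos_iff w.1).mpr (coe_ne_zero u)

lemma sum_logEmb (u : (𝓞 K)ˣ) : ∑ w, logEmb K u w = 0 := by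
  have h := congr_arg Real.log (prod_eq_abs_norm (u : K))
  rw [Units.norm, Rat.cast_one, Real.log_one, Real.log_prod
    (fun w _ => pow_ne_zero _ (ne_of_gt (place_pos w u)))] at h
  simp_rw [Real.log_pow] at h
  simpa [logEmb] using h

lemma logEmb_prod_zpow {m : ℕ} (v : Fin m → (𝓞 K)ˣ) (e : Fin m → ℤ) :
    logEmb K (∏ i, v i ^ e i) = ∑ i, (e i : ℝ) • logEmb K (v i) := by
  funext w
  simp only [logEmb_apply, Finset.sum_apply, Pi.smul_apply, smul_eq_mul]
  rw [show ((∏ i, v i ^ e i : (𝓞 K)ˣ) : K) = ∏ i, ((v i : K) ^ e i) from coe_prod_zpow v e,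
    map_prod]
  simp_rw [map_zpow₀]
  rw [Real.log_prod (fun i _ => zpow_ne_zero _ (ne_of_gt (place_pos w (v i))))]
  simp_rw [Real.log_zpow]
  rw [Finset.mul_sum]
  exact Finset.sum_congr rfl fun i _ => by ring

lemma logEmb_mul (u v : (𝓞 K)ˣ) : logEmb K (u * v) = logEmb K u + logEmb K v := by
  funext w
  simp only [logEmb_apply, Pi.add_apply]
  rw [show ((u * v : (𝓞 K)ˣ) : K) = (u : K) * (v : K) from rfl, map_mul,
    Real.log_mul (ne_of_gt (place_pos w u)) (ne_of_gt (place_pos w v))]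
  ring

lemma logEmb_one : logEmb K 1 = 0 := by
  funext w; simp [logEmb_apply, show ((1 : (𝓞 K)ˣ) : K) = 1 from rfl]

lemma logEmb_inv (u : (𝓞 K)ˣ) : logEmb K u⁻¹ = - logEmb K u := by
  have := logEmb_mul u u⁻¹
  rw [mul_inv_cancel, logEmb_one] at this
  exact eq_neg_of_add_eq_zero_right this.symm


lemma sum_embeddings_eq (x : K) :
    ∑ σ : K →+* ℂ, max 0 (Real.log ‖σ x‖) =
      ∑ w : InfinitePlace K, (mult w : ℝ) * max 0 (Real.log (w x)) := by
  classical
  rw [← Finset.sum_fiberwise Finset.univ (fun φ => InfinitePlace.mk φ)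
    (fun φ => max 0 (Real.log ‖φ x‖))]
  refine Finset.sum_congr rfl fun w _ => ?_
  have h (φ : K →+* ℂ) (hφ : φ ∈ ({φ | InfinitePlace.mk φ = w} : Finset _)) :
      ‖φ x‖ = w x := by
    rw [← (Finset.mem_filter.mp hφ).2, InfinitePlace.apply]
  rw [Finset.sum_congr rfl (fun φ hφ => by rw [h φ hφ]), Finset.sum_const, card_filter_mk_eq]
  simp [nsmul_eq_mul]

lemma weilHeight_nonneg (x : 𝓞 K) : 0 ≤ weilHeight K x := by
  apply div_nonneg _ (Nat.cast_nonneg _)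
  exact Finset.sum_nonneg fun σ _ => le_max_left _ _

lemma weilHeight_unit_eq (u : (𝓞 K)ˣ) :
    weilHeight K (u : 𝓞 K) =
      (∑ w : InfinitePlace K, max 0 (logEmb K u w)) / (Module.finrank ℚ K : ℝ) := by
  rw [weilHeight, sum_embeddings_eq]
  congr 1
  refine Finset.sum_congr rfl fun w _ => ?_
  rw [logEmb, max_comm, mul_max_of_nonneg _ _ (Nat.cast_nonneg _), mul_zero, max_comm]

lemma max_zero_eq (t : ℝ) : max 0 t = (t + |t|) / 2 := by
  rcases le_total 0 t with h | h
  · rw [max_eq_right h, abs_of_nonneg h]; ring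
  · rw [max_eq_left h, abs_of_nonpos h]; ring


/-- restriction to places different from `w₀` -/
noncomputable def pr (K : Type) [Field K] [NumberField K] :
    (InfinitePlace K → ℝ) →ₗ[ℝ] ({w : InfinitePlace K // w ≠ w₀} → ℝ) :=
  LinearMap.funLeft ℝ ℝ Subtype.val

lemma pr_logEmb (u : (𝓞 K)ˣ) :
    pr K (logEmb K u) = logEmbedding K (Additive.ofMul u) := rfl

lemma norm_le_card_mul_norm_pr {v : InfinitePlace K → ℝ} (hv : ∑ w, v w = 0) :
    ‖v‖ ≤ (Fintype.card (InfinitePlace K) : ℝ) * ‖pr K v‖ := by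
  classical
  have hnn : (0:ℝ) ≤ (Fintype.card (InfinitePlace K) : ℝ) * ‖pr K v‖ := by positivity
  rw [pi_norm_le_iff_of_nonneg hnn]
  intro w
  by_cases hw : w = w₀
  · subst hw
    have : v w₀ = - ∑ w ∈ Finset.univ.erase w₀, v w := by
      rw [eq_neg_iff_add_eq_zero, ← Finset.sum_insert (Finset.notMem_erase w₀ _),
        Finset.insert_erase (Finset.mem_univ w₀)]
      exact hv
    rw [Real.norm_eq_abs, this, abs_neg]
    calc |∑ w ∈ Finset.univ.erase w₀, v w| ≤ ∑ w ∈ Finset.univ.erase w₀, |v w| :=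
          Finset.abs_sum_le_sum_abs _ _
      _ ≤ ∑ _w ∈ Finset.univ.erase w₀, ‖pr K v‖ := by
          refine Finset.sum_le_sum fun w hw => ?_
          exact norm_le_pi_norm (pr K v) ⟨w, Finset.ne_of_mem_erase hw⟩
      _ ≤ (Fintype.card (InfinitePlace K) : ℝ) * ‖pr K v‖ := by
          rw [Finset.sum_const, nsmul_eq_mul]
          have hcard : (Finset.univ.erase (w₀ : InfinitePlace K)).card
              ≤ Fintype.card (InfinitePlace K) := by
            simpa using Finset.card_le_card (Finset.erase_subset _ _)
          exact mul_le_mul_of_nonneg_right (by exact_mod_cast hcard) (norm_nonneg _)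
  · have h2 : ‖v w‖ ≤ ‖pr K v‖ := norm_le_pi_norm (pr K v) ⟨w, hw⟩
    refine h2.trans ?_
    nlinarith [norm_nonneg (pr K v),
      (show (1:ℝ) ≤ Fintype.card (InfinitePlace K) by exact_mod_cast Fintype.card_pos)]

/-- Uniform covering bound: every vector in the trace-zero hyperplane is within a fixed
distance `C` of the log-embedding of some unit. -/
lemma exists_cover : ∃ C : ℝ, 0 ≤ C ∧ ∀ v : InfinitePlace K → ℝ, (∑ w, v w = 0) →
    ∃ u : (𝓞 K)ˣ, ‖v - logEmb K u‖ ≤ C := by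
  classical
  set B := (basisUnitLattice K).ofZLatticeBasis ℝ (unitLattice K) with hB
  refine ⟨(Fintype.card (InfinitePlace K) : ℝ) * ((1:ℝ)/2 * ∑ i, ‖B i‖), by positivity, ?_⟩
  intro v hv
  set c := B.repr (pr K v) with hc
  set u : (𝓞 K)ˣ := ∏ i, fundSystem K i ^ (round (c i)) with hu
  refine ⟨u, ?_⟩
  have hsum : ∑ w, (v - logEmb K u) w = 0 := by
    simp only [Pi.sub_apply, Finset.sum_sub_distrib, hv, sum_logEmb, sub_zero]
  refine (norm_le_card_mul_norm_pr hsum).trans ?_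
  refine mul_le_mul_of_nonneg_left ?_ (Nat.cast_nonneg _)
  -- compute pr of v - logEmb u
  have hlog : logEmb K u = ∑ i, ((round (c i) : ℝ)) • logEmb K (fundSystem K i) := by
    rw [hu]; exact logEmb_prod_zpow _ _
  have hprB : pr K (logEmb K u) = ∑ i, ((round (c i) : ℝ)) • B i := by
    rw [hlog, map_sum]
    refine Finset.sum_congr rfl fun i _ => ?_
    rw [map_smul, pr_logEmb, logEmbedding_fundSystem, hB, Module.Basis.ofZLatticeBasis_apply]
  have hrepr : ∀ j, B.repr (pr K (v - logEmb K u)) j = c j - (round (c j) : ℝ) := by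
    intro j
    rw [map_sub, map_sub, hprB, map_sum, ← hc]
    simp only [map_smul, Finsupp.coe_sub, Finsupp.coe_smul, Pi.sub_apply]
    rw [Finsupp.finset_sum_apply]
    simp_rw [Finsupp.smul_apply, B.repr_self_apply]
    rw [Finset.sum_eq_single j (fun i _ hij => by simp [hij]) (by simp)]
    simp
  calc ‖pr K (v - logEmb K u)‖
      = ‖∑ j, B.repr (pr K (v - logEmb K u)) j • B j‖ := by rw [B.sum_repr]
    _ ≤ ∑ j, ‖B.repr (pr K (v - logEmb K u)) j • B j‖ := norm_sum_le _ _
    _ ≤ ∑ j, (1:ℝ)/2 * ‖B j‖ := by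
        refine Finset.sum_le_sum fun j _ => ?_
        rw [norm_smul, Real.norm_eq_abs, hrepr j]
        exact mul_le_mul_of_nonneg_right (abs_sub_round _) (norm_nonneg _)
    _ = (1:ℝ)/2 * ∑ i, ‖B i‖ := by rw [Finset.mul_sum]

lemma weilHeight_unit_le (u : (𝓞 K)ˣ) :
    weilHeight K (u : 𝓞 K) ≤
      (Fintype.card (InfinitePlace K) : ℝ) / (2 * (Module.finrank ℚ K : ℝ)) * ‖logEmb K u‖ := by
  have hd : (0:ℝ) < (Module.finrank ℚ K : ℝ) := by exact_mod_cast Module.finrank_pos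
  rw [weilHeight_unit_eq]
  have h1 : ∑ w, max 0 (logEmb K u w) = (∑ w, |logEmb K u w|) / 2 := by
    simp_rw [max_zero_eq]
    rw [← Finset.sum_div, Finset.sum_add_distrib, sum_logEmb, zero_add]
  have h2 : ∑ w, |logEmb K u w| ≤ (Fintype.card (InfinitePlace K) : ℝ) * ‖logEmb K u‖ := by
    calc ∑ w, |logEmb K u w| ≤ ∑ _w : InfinitePlace K, ‖logEmb K u‖ :=
        Finset.sum_le_sum fun w _ => norm_le_pi_norm (logEmb K u) w
      _ = _ := by rw [Finset.sum_const, nsmul_eq_mul, Finset.card_univ]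
  rw [h1, div_div, show (Fintype.card (InfinitePlace K) : ℝ) / (2 * (Module.finrank ℚ K : ℝ))
      * ‖logEmb K u‖ = ((Fintype.card (InfinitePlace K) : ℝ) * ‖logEmb K u‖)
      / (2 * (Module.finrank ℚ K : ℝ)) from by ring]
  gcongr

lemma bddBelow_range_dist (v : InfinitePlace K → ℝ) :
    BddBelow (Set.range fun u : (𝓞 K)ˣ => ‖v - logEmb K u‖) :=
  ⟨0, by rintro x ⟨u, rfl⟩; exact norm_nonneg _⟩

lemma bddAbove_rho : BddAbove (Set.range fun v : {v : InfinitePlace K → ℝ // ∑ w, v w = 0} =>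
    ⨅ u : (𝓞 K)ˣ, ‖(v : InfinitePlace K → ℝ) - logEmb K u‖) := by
  obtain ⟨C, hC0, hC⟩ := exists_cover (K := K)
  refine ⟨C, ?_⟩
  rintro x ⟨v, rfl⟩
  obtain ⟨u, hu⟩ := hC v v.2
  exact ciInf_le_of_le (bddBelow_range_dist _) u hu

lemma rhoInf_nonneg : 0 ≤ rhoInf K := by
  have h := le_ciSup (bddAbove_rho (K := K))
    (⟨0, by simp⟩ : {v : InfinitePlace K → ℝ // ∑ w, v w = 0})
  exact le_trans (le_ciInf fun u => norm_nonneg _) h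

lemma dist_lt_rho_add (v : {v : InfinitePlace K → ℝ // ∑ w, v w = 0}) {δ : ℝ} (hδ : 0 < δ) :
    ∃ u : (𝓞 K)ˣ, ‖(v : InfinitePlace K → ℝ) - logEmb K u‖ < rhoInf K + δ := by
  have h1 : (⨅ u : (𝓞 K)ˣ, ‖(v : InfinitePlace K → ℝ) - logEmb K u‖) ≤ rhoInf K :=
    le_ciSup (bddAbove_rho (K := K)) v
  exact exists_lt_of_ciInf_lt (lt_of_le_of_lt h1 (by linarith))

lemma span_short_units {ε : ℝ} (hε : 0 < ε) {v : InfinitePlace K → ℝ} (hv : ∑ w, v w = 0) :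
    v ∈ Submodule.span ℝ (logEmb K '' {u : (𝓞 K)ˣ | ‖logEmb K u‖ ≤ 2 * rhoInf K + ε}) := by
  set V := Submodule.span ℝ (logEmb K '' {u : (𝓞 K)ˣ | ‖logEmb K u‖ ≤ 2 * rhoInf K + ε}) with hV
  by_contra hvV
  set t : ℝ := ε / (2 * (‖v‖ + 1)) with ht
  have hvpos : 0 < ‖v‖ + 1 := by positivity
  have htpos : 0 < t := by positivity
  have htv : t * ‖v‖ ≤ ε / 2 := by
    rw [ht, div_mul_eq_mul_div, div_le_div_iff₀ (by positivity) (by norm_num)]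
    nlinarith [norm_nonneg v]
  have hsel : ∀ m : ℕ, ∃ u : (𝓞 K)ˣ, ‖((m : ℝ) * t) • v - logEmb K u‖ < rhoInf K + ε/4 := by
    intro m
    exact dist_lt_rho_add ⟨((m : ℝ) * t) • v, by
      simp only [Pi.smul_apply, smul_eq_mul, ← Finset.mul_sum, hv, mul_zero]⟩ (by positivity)
  choose u hu using hsel
  have hstep : ∀ m : ℕ, logEmb K (u (m+1)) - logEmb K (u m) ∈ V := by
    intro m
    have hdiff : logEmb K (u (m+1) * (u m)⁻¹) = logEmb K (u (m+1)) - logEmb K (u m) := by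
      rw [logEmb_mul, logEmb_inv, sub_eq_add_neg]
    have hnorm : ‖logEmb K (u (m+1) * (u m)⁻¹)‖ ≤ 2 * rhoInf K + ε := by
      rw [hdiff]
      have hsplit : logEmb K (u (m+1)) - logEmb K (u m) =
          (logEmb K (u (m+1)) - (((m:ℝ)+1) * t) • v) + ((((m:ℝ)+1) * t) • v - ((m:ℝ) * t) • v)
            + (((m:ℝ) * t) • v - logEmb K (u m)) := by abel
      have hmid : ‖(((m:ℝ)+1) * t) • v - ((m:ℝ) * t) • v‖ = t * ‖v‖ := by
        rw [← sub_smul, show ((m:ℝ)+1) * t - (m:ℝ) * t = t from by ring, norm_smul,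
          Real.norm_eq_abs, abs_of_pos htpos]
      have h1 : ‖logEmb K (u (m+1)) - (((m:ℝ)+1) * t) • v‖ < rhoInf K + ε/4 := by
        rw [norm_sub_rev]
        have := hu (m+1)
        push_cast at this ⊢
        exact this
      have h2 := hu m
      calc ‖logEmb K (u (m+1)) - logEmb K (u m)‖
          ≤ ‖logEmb K (u (m+1)) - (((m:ℝ)+1) * t) • v‖ + ‖(((m:ℝ)+1) * t) • v - ((m:ℝ) * t) • v‖
            + ‖((m:ℝ) * t) • v - logEmb K (u m)‖ := by rw [hsplit]; exact norm_add₃_le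
        _ ≤ 2 * rhoInf K + ε := by rw [hmid]; linarith
    rw [← hdiff]
    exact Submodule.subset_span ⟨u (m+1) * (u m)⁻¹, hnorm, rfl⟩
  have hchain : ∀ m : ℕ, logEmb K (u m) - logEmb K (u 0) ∈ V := by
    intro m
    induction m with
    | zero => simpa using V.zero_mem
    | succ k ih =>
        have := V.add_mem (hstep k) ih
        rwa [sub_add_sub_cancel] at this
  have hclosed : IsClosed (V : Set (InfinitePlace K → ℝ)) := V.closed_of_finiteDimensional
  have hpos : 0 < Metric.infDist v (V : Set (InfinitePlace K → ℝ)) :=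
    (hclosed.notMem_iff_infDist_pos ⟨0, V.zero_mem⟩).mp hvV
  set a := Metric.infDist v (V : Set (InfinitePlace K → ℝ)) with ha
  have key : ∀ m : ℕ, 0 < m → (m : ℝ) * t * a ≤ rhoInf K + ε/4 + ‖logEmb K (u 0)‖ := by
    intro m hm
    have hmt : 0 < (m:ℝ) * t := by positivity
    set z : InfinitePlace K → ℝ := logEmb K (u m) - logEmb K (u 0) with hz
    have hzV : z ∈ V := hchain m
    have hlow : (m : ℝ) * t * a ≤ dist (((m:ℝ) * t) • v) z := by
      have hz' : z = ((m:ℝ) * t) • (((m:ℝ) * t)⁻¹ • z) := (smul_inv_smul₀ (ne_of_gt hmt) z).symm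
      rw [hz', dist_smul₀, Real.norm_eq_abs, abs_of_pos hmt]
      refine mul_le_mul_of_nonneg_left ?_ (le_of_lt hmt)
      exact Metric.infDist_le_dist_of_mem (V.smul_mem _ hzV)
    have hup : dist (((m:ℝ) * t) • v) z ≤ rhoInf K + ε/4 + ‖logEmb K (u 0)‖ := by
      rw [dist_eq_norm, hz, show ((m:ℝ) * t) • v - (logEmb K (u m) - logEmb K (u 0)) =
        (((m:ℝ) * t) • v - logEmb K (u m)) + logEmb K (u 0) from by abel]
      exact (norm_add_le _ _).trans (by have := (hu m).le; linarith)
    exact hlow.trans hup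
  obtain ⟨m, hm⟩ := exists_nat_gt ((rhoInf K + ε/4 + ‖logEmb K (u 0)‖) / (t * a))
  have hR : 0 ≤ rhoInf K + ε/4 + ‖logEmb K (u 0)‖ := by
    have := rhoInf_nonneg (K := K); have := norm_nonneg (logEmb K (u 0)); linarith
  have hm1 : 0 < m := by
    rcases Nat.eq_zero_or_pos m with h | h
    · exfalso
      rw [h] at hm
      simp only [Nat.cast_zero] at hm
      have : 0 ≤ (rhoInf K + ε/4 + ‖logEmb K (u 0)‖) / (t * a) := by positivity
      linarith
    · exact h
  have hkey := key m hm1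
  rw [div_lt_iff₀ (by positivity)] at hm
  nlinarith

noncomputable def sumF (K : Type) [Field K] [NumberField K] :
    (InfinitePlace K → ℝ) →ₗ[ℝ] ℝ where
  toFun v := ∑ w, v w
  map_add' a b := by simp [Finset.sum_add_distrib]
  map_smul' c a := by simp [Finset.mul_sum]

lemma ker_sumF_finrank :
    Module.finrank ℝ (LinearMap.ker (sumF K)) = Fintype.card (InfinitePlace K) - 1 := by
  have hcard : 0 < Fintype.card (InfinitePlace K) := Fintype.card_pos
  have hsurj : Function.Surjective (sumF K) := by
    intro r
    refine ⟨fun _ => r / (Fintype.card (InfinitePlace K) : ℝ), ?_⟩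
    have h0 : (0:ℝ) < (Fintype.card (InfinitePlace K) : ℝ) := by exact_mod_cast hcard
    show ∑ _w : InfinitePlace K, r / (Fintype.card (InfinitePlace K) : ℝ) = r
    rw [Finset.sum_const, Finset.card_univ, nsmul_eq_mul]
    field_simp
  have h := LinearMap.finrank_range_add_finrank_ker (sumF K)
  rw [LinearMap.range_eq_top.mpr hsurj, finrank_top, Module.finrank_self,
    Module.finrank_pi] at h
  omega

lemma multIndep_of_li {n : ℕ} {u : Fin n → (𝓞 K)ˣ}
    (h : LinearIndependent ℝ (fun i => logEmb K (u i))) : MultIndep K u := by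
  intro e he i
  have h0 : ∑ j, (e j : ℝ) • logEmb K (u j) = 0 := by
    rw [← logEmb_prod_zpow, he, logEmb_one]
  have := Fintype.linearIndependent_iff.mp h (fun j => (e j : ℝ)) h0 i
  exact_mod_cast this

lemma exists_indep_short_units {ε : ℝ} (hε : 0 < ε) {n : ℕ} (hnr : n ≤ Units.rank K) :
    ∃ u : Fin n → (𝓞 K)ˣ, MultIndep K u ∧ ∀ i, ‖logEmb K (u i)‖ ≤ 2 * rhoInf K + ε := by
  classical
  set S : Set (InfinitePlace K → ℝ) :=
    logEmb K '' {u : (𝓞 K)ˣ | ‖logEmb K u‖ ≤ 2 * rhoInf K + ε} with hS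
  obtain ⟨b, hbS, hbspan, hbli⟩ := exists_linearIndependent ℝ S
  have hker : LinearMap.ker (sumF K) ≤ Submodule.span ℝ S := by
    intro v hv
    exact span_short_units hε (LinearMap.mem_ker.mp hv)
  have hbfin : b.Finite := hbli.setFinite
  haveI : Fintype b := hbfin.fintype
  have hdim : n ≤ Fintype.card b := by
    have h1 : Module.finrank ℝ (LinearMap.ker (sumF K))
        ≤ Module.finrank ℝ (Submodule.span ℝ b) := by
      rw [hbspan]; exact Submodule.finrank_mono hker
    rw [finrank_span_set_eq_card hbli, ker_sumF_finrank] at h1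
    have h2 : b.toFinset.card = Fintype.card b := Set.toFinset_card b
    have h3 : n ≤ Fintype.card (InfinitePlace K) - 1 := hnr
    omega
  obtain ⟨f⟩ := Function.Embedding.nonempty_of_card_le (by rwa [Fintype.card_fin] : 
    Fintype.card (Fin n) ≤ Fintype.card b)
  have hmem : ∀ i : Fin n, ((f i : InfinitePlace K → ℝ)) ∈ S := fun i => hbS (f i).2
  choose uu hcond heq using hmem
  refine ⟨uu, ?_, fun i => hcond i⟩
  apply multIndep_of_li
  have : (fun i : Fin n => logEmb K (uu i)) = fun i => ((f i : InfinitePlace K → ℝ)) := by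
    funext i; exact heq i
  rw [this]
  exact hbli.comp f f.injective

end RhoAux

/-- For `1 ≤ n ≤ r` (the unit rank), `ρ_∞(K) ≥ (d/s)·μ_K(n)^{1/n}` where `d = [K:ℚ]` and
`s` is the number of infinite places of `K`. -/


theorem rhoInf_ge_muK (K : Type) [Field K] [NumberField K]
    (n : ℕ) (hn1 : 1 ≤ n) (hnr : n ≤ NumberField.Units.rank K) :
    (Module.finrank ℚ K : ℝ) / (Fintype.card (NumberField.InfinitePlace K) : ℝ) *
      (muK K n) ^ ((1 : ℝ) / (n : ℝ)) ≤ rhoInf K := by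
  have hd : (0:ℝ) < (Module.finrank ℚ K : ℝ) := by exact_mod_cast Module.finrank_pos
  have hs : (0:ℝ) < (Fintype.card (NumberField.InfinitePlace K) : ℝ) := by
    exact_mod_cast Fintype.card_pos
  set d := (Module.finrank ℚ K : ℝ) with hdd
  set s := (Fintype.card (NumberField.InfinitePlace K) : ℝ) with hss
  have hρ : 0 ≤ rhoInf K := RhoAux.rhoInf_nonneg
  have hn0 : (0:ℝ) < (n : ℝ) := by exact_mod_cast hn1
  have hμ0 : 0 ≤ muK K n := by
    apply Real.sInf_nonneg
    rintro t ⟨v, hv, rfl⟩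
    exact Finset.prod_nonneg fun i _ => RhoAux.weilHeight_nonneg _
  have key : ∀ ε : ℝ, 0 < ε → muK K n ≤ (s/(2*d) * (2*rhoInf K + ε))^n := by
    intro ε hε
    obtain ⟨u, hind, hnorm⟩ := RhoAux.exists_indep_short_units (K := K) hε hnr
    have hbdd : BddBelow {t : ℝ | ∃ v : Fin n → (𝓞 K)ˣ, MultIndep K v ∧
        t = ∏ i, weilHeight K ((v i : 𝓞 K))} := by
      refine ⟨0, ?_⟩
      rintro t ⟨v, hv, rfl⟩
      exact Finset.prod_nonneg fun i _ => RhoAux.weilHeight_nonneg _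
    refine (csInf_le hbdd ⟨u, hind, rfl⟩).trans ?_
    calc ∏ i, weilHeight K ((u i : 𝓞 K))
        ≤ ∏ _i : Fin n, (s/(2*d) * (2*rhoInf K + ε)) := by
          refine Finset.prod_le_prod (fun i _ => RhoAux.weilHeight_nonneg _) (fun i _ => ?_)
          refine (RhoAux.weilHeight_unit_le (u i)).trans ?_
          exact mul_le_mul_of_nonneg_left (hnorm i) (by positivity)
      _ = (s/(2*d) * (2*rhoInf K + ε))^n := by
          rw [Finset.prod_const, Finset.card_univ, Fintype.card_fin]
  have key2 : ∀ ε : ℝ, 0 < ε →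
      (muK K n) ^ ((1:ℝ)/(n:ℝ)) ≤ s/(2*d) * (2*rhoInf K + ε) := by
    intro ε hε
    have hM : (0:ℝ) ≤ s/(2*d) * (2*rhoInf K + ε) := by positivity
    have h := Real.rpow_le_rpow hμ0 (key ε hε) (by positivity : (0:ℝ) ≤ 1/(n:ℝ))
    rwa [← Real.rpow_natCast (s/(2*d) * (2*rhoInf K + ε)) n, ← Real.rpow_mul hM,
      mul_one_div, div_self (ne_of_gt hn0), Real.rpow_one] at h
  have key3 : (muK K n) ^ ((1:ℝ)/(n:ℝ)) ≤ s/d * rhoInf K := by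
    by_contra hcon
    push_neg at hcon
    set δ := (muK K n) ^ ((1:ℝ)/(n:ℝ)) - s/d * rhoInf K with hδ
    have hδpos : 0 < δ := sub_pos.mpr hcon
    have := key2 (δ * d / s) (by positivity)
    have hexp : s/(2*d) * (2*rhoInf K + δ * d / s) = s/d * rhoInf K + δ/2 := by
      field_simp
    rw [hexp] at this
    rw [hδ] at this
    linarith
  calc d/s * (muK K n) ^ ((1:ℝ)/(n:ℝ)) ≤ d/s * (s/d * rhoInf K) := by
        exact mul_le_mul_of_nonneg_left key3 (by positivity)
    _ = rhoInf K := by field_simp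
end

section
/- Let K be a number field, x ∈ K, and B > 0. Then the set of units u ∈ O_K^× such that |σ(xu)| ≥ B for all embeddings σ : K → ℂ is finite. -/
open NumberField Finset

lemma prod_abs_embeddings (K : Type) [Field K] [NumberField K] (y : K) :
    ∏ φ : K →+* ℂ, ‖φ y‖ = |Algebra.norm ℚ y| := by
  have h := congr_arg (‖·‖) (Algebra.norm_eq_prod_embeddings ℚ ℂ y)
  rw [norm_prod] at h
  refine (Fintype.prod_equiv (RingHom.equivRatAlgHom K ℂ) (fun φ => ‖φ y‖)
      (fun f => ‖f y‖) fun _ => by simp [RingHom.equivRatAlgHom_apply]).trans ?_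
  rw [← h, eq_ratCast, Rat.cast_abs, Complex.norm_ratCast]

/-- For `x ∈ K` and `B > 0`, there are only finitely many units `u ∈ 𝓞_K^×` such that
`|σ(xu)| ≥ B` for every embedding `σ : K → ℂ`. -/
theorem finitely_many_solutions (K : Type) [Field K] [NumberField K]
    (x : K) (B : ℝ) (hB : 0 < B) :
    {u : (𝓞 K)ˣ | ∀ σ : K →+* ℂ,
      B ≤ ‖σ (x * ((u : 𝓞 K) : K))‖}.Finite := by
  classical
  have hne : Nonempty (K →+* ℂ) := by
    have := NumberField.Embeddings.card K ℂ
    have : 0 < Fintype.card (K →+* ℂ) := by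
      rw [this]; exact Module.finrank_pos
    exact Fintype.card_pos_iff.mp this
  obtain ⟨σ₀⟩ := hne
  by_cases hx : x = 0
  · refine Set.Finite.subset Set.finite_empty fun u hu => ?_
    have := hu σ₀
    simp [hx] at this
    linarith
  -- M : max of |σ x|
  set M : ℝ := Finset.univ.sup' ⟨σ₀, Finset.mem_univ σ₀⟩ (fun σ : K →+* ℂ => ‖σ x‖)
    with hM
  have hMpos : 0 < M := by
    rw [hM]
    refine lt_of_lt_of_le ?_
      (Finset.le_sup' (fun σ : K →+* ℂ => ‖σ x‖) (Finset.mem_univ σ₀))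
    simpa using hx
  have hMle : ∀ σ : K →+* ℂ, ‖σ x‖ ≤ M := by
    intro σ
    rw [hM]
    exact Finset.le_sup' (fun σ : K →+* ℂ => ‖σ x‖) (Finset.mem_univ σ)
  set n := Fintype.card (K →+* ℂ)
  set C : ℝ := (M / B) ^ (n - 1) with hC
  have hfin := NumberField.Embeddings.finite_of_norm_le K ℂ C
  refine Set.Finite.subset (Set.Finite.preimage
    (Set.injOn_of_injective (f := fun u : (𝓞 K)ˣ => ((u : 𝓞 K) : K)) ?_) hfin) ?_
  · intro u v h
    exact Units.ext (RingOfIntegers.coe_injective h)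
  · intro u hu
    have hlow : ∀ σ : K →+* ℂ, B / M ≤ ‖σ ((u : 𝓞 K) : K)‖ := by
      intro σ
      have h1 := hu σ
      rw [map_mul, norm_mul] at h1
      rw [div_le_iff₀ hMpos]
      calc B ≤ ‖σ x‖ * ‖σ ((u : 𝓞 K) : K)‖ := h1
        _ ≤ ‖σ ((u : 𝓞 K) : K)‖ * M := by
          rw [mul_comm]
          exact mul_le_mul_of_nonneg_left (hMle σ) (norm_nonneg _)
    refine ⟨RingOfIntegers.isIntegral_coe _, fun φ => ?_⟩
    have hprod : ∏ σ : K →+* ℂ, ‖σ ((u : 𝓞 K) : K)‖ = 1 := by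
      rw [prod_abs_embeddings]
      exact_mod_cast NumberField.Units.norm K u
    have hBM : 0 < B / M := div_pos hB hMpos
    have hsplit : ‖φ ((u : 𝓞 K) : K)‖ *
        ∏ σ ∈ Finset.univ.erase φ, ‖σ ((u : 𝓞 K) : K)‖ = 1 := by
      rw [Finset.mul_prod_erase Finset.univ (fun σ : K →+* ℂ => ‖σ ((u : 𝓞 K) : K)‖)
        (Finset.mem_univ φ)]
      exact hprod
    have hrest : (B / M) ^ (n - 1) ≤
        ∏ σ ∈ Finset.univ.erase φ, ‖σ ((u : 𝓞 K) : K)‖ := by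
      have hcard : (Finset.univ.erase φ).card = n - 1 := by
        rw [Finset.card_erase_of_mem (Finset.mem_univ φ), Finset.card_univ]
      calc (B / M) ^ (n - 1) = ∏ _σ ∈ Finset.univ.erase φ, (B / M) := by
            rw [Finset.prod_const, hcard]
        _ ≤ _ := Finset.prod_le_prod (fun _ _ => le_of_lt hBM) (fun σ _ => hlow σ)
    have hφpos : 0 < ‖φ ((u : 𝓞 K) : K)‖ := lt_of_lt_of_le hBM (hlow φ)
    have hrpos : 0 < (B / M) ^ (n - 1) := pow_pos hBM _
    have : ‖φ ((u : 𝓞 K) : K)‖ ≤ 1 / (B / M) ^ (n - 1) := by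
      rw [le_div_iff₀ hrpos]
      calc ‖φ ((u : 𝓞 K) : K)‖ * (B / M) ^ (n - 1)
          ≤ ‖φ ((u : 𝓞 K) : K)‖ *
            ∏ σ ∈ Finset.univ.erase φ, ‖σ ((u : 𝓞 K) : K)‖ :=
            mul_le_mul_of_nonneg_left hrest (le_of_lt hφpos)
        _ = 1 := hsplit
    calc ‖φ ((u : 𝓞 K) : K)‖ ≤ 1 / (B / M) ^ (n - 1) := this
      _ = C := by rw [hC, one_div, ← inv_pow, inv_div]
end
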